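/- arXiv:2306.12575 — 2 statements merged into one kernel-verified Lean document; each statement's English description precedes it below -/
import Mathlib

section
/- For every $b \geq 1$ there exists a connected graph $G$ and a connected spanning subgraph $H \subseteq G$ such that the path-restricted expected damage satisfies $E_{pr}(G; b, b, \infty) < E_{pr}(H; b, b, \infty)$; moreover the ratio $E_{pr}(H;b,b,\infty)/E_{pr}(G;b,b,\infty)$ can be made arbitrarily large. In particular, expected damage in the path-restricted game is not monotone under edge deletion. -/
open SimpleGraph Finset
open scoped Classical

namespace FF

variable {V : Type*} [Fintype V] [DecidableEq V]

/-- One step of fire spread: the fire spreads to every undefended neighbour of a burnt vertex. -/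
noncomputable def spread (G : SimpleGraph V) (D B : Finset V) : Finset V :=
  B ∪ Finset.univ.filter (fun v => v ∉ D ∧ ∃ u ∈ B, G.Adj u v)

/-- Cumulative defended set of a classic strategy. -/
noncomputable def cumDef (σ : ℕ → Finset V) (t : ℕ) : Finset V :=
  (Finset.range (t + 1)).biUnion σ

/-- Burnt set at time `t` in the classic game. -/
noncomputable def burnt (G : SimpleGraph V) (F : Finset V) (σ : ℕ → Finset V) : ℕ → Finset V
  | 0 => F
  | t + 1 => spread G (cumDef σ t) (burnt G F σ t)

/-- A classic strategy is valid for `b` firefighters. -/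
def ValidClassic (G : SimpleGraph V) (F : Finset V) (b : ℕ) (σ : ℕ → Finset V) : Prop :=
  ∀ t, (σ t).card ≤ b ∧ ∀ v ∈ σ t, v ∉ burnt G F σ t

/-- Final burnt set (the process stabilizes after `|V|` steps). -/
noncomputable def finalBurnt (G : SimpleGraph V) (F : Finset V) (σ : ℕ → Finset V) : Finset V :=
  burnt G F σ (Fintype.card V)

/-- Maximum number of vertices saved in the classic game. -/
noncomputable def MVS (G : SimpleGraph V) (F : Finset V) (b : ℕ) : ℕ :=
  sSup {k | ∃ σ : ℕ → Finset V, ValidClassic G F b σ ∧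
    k = Fintype.card V - (finalBurnt G F σ).card}

/-- Defended set induced by firefighter positions up to time `t`. -/
noncomputable def posDef {b : ℕ} (p : ℕ → Fin b → V) (t : ℕ) : Finset V :=
  (Finset.range (t + 1)).biUnion (fun τ => Finset.univ.image (p τ))

/-- Burnt set at time `t` in the position-based games. -/
noncomputable def pburnt (G : SimpleGraph V) (F : Finset V) {b : ℕ}
    (p : ℕ → Fin b → V) : ℕ → Finset V
  | 0 => F
  | t + 1 => spread G (posDef p t) (pburnt G F p t)

/-- Validity for the distance-restricted game: firefighters never occupy a burnt
vertex and move graph distance at most `d` each turn. -/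
def ValidDR (G : SimpleGraph V) (F : Finset V) (d : ℕ) {b : ℕ} (p : ℕ → Fin b → V) : Prop :=
  (∀ t i, p t i ∉ pburnt G F p t) ∧ ∀ t i, G.dist (p t i) (p (t + 1) i) ≤ d

/-- Distance-restricted maximum vertices saved. -/
noncomputable def DRMVS (G : SimpleGraph V) (F : Finset V) (b d : ℕ) : ℕ :=
  sSup {k | ∃ p : ℕ → Fin b → V, ValidDR G F d p ∧
    k = Fintype.card V - (pburnt G F p (Fintype.card V)).card}

/-- Validity for the path-restricted game with unlimited distance: firefighters
move along walks of unburnt vertices. -/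
def ValidPR (G : SimpleGraph V) (F : Finset V) {b : ℕ} (p : ℕ → Fin b → V) : Prop :=
  (∀ t i, p t i ∉ pburnt G F p t) ∧
    ∀ t i, ∃ w : G.Walk (p t i) (p (t + 1) i),
      ∀ v ∈ w.support, v ∉ pburnt G F p (t + 1)

/-- Path-restricted (unlimited distance) maximum vertices saved. -/
noncomputable def PRMVS (G : SimpleGraph V) (F : Finset V) (b : ℕ) : ℕ :=
  sSup {k | ∃ p : ℕ → Fin b → V, ValidPR G F p ∧
    k = Fintype.card V - (pburnt G F p (Fintype.card V)).card}

/-- Validity for the distance- and path-restricted game. -/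
def ValidDPR (G : SimpleGraph V) (F : Finset V) (d : ℕ) {b : ℕ} (p : ℕ → Fin b → V) : Prop :=
  (∀ t i, p t i ∉ pburnt G F p t) ∧
    ∀ t i, ∃ w : G.Walk (p t i) (p (t + 1) i), w.length ≤ d ∧
      ∀ v ∈ w.support, v ∉ pburnt G F p (t + 1)

/-- Distance- and path-restricted maximum vertices saved. -/
noncomputable def DPRMVS (G : SimpleGraph V) (F : Finset V) (b d : ℕ) : ℕ :=
  sSup {k | ∃ p : ℕ → Fin b → V, ValidDPR G F d p ∧
    k = Fintype.card V - (pburnt G F p (Fintype.card V)).card}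

/-- Burnt count in the single-defence game: the firefighter defends a single
vertex `w ≠ s` and the fire then burns everything reachable from `s` avoiding `w`. -/
noncomputable def sdBurnt (G : SimpleGraph V) (s : V) : ℕ :=
  sInf {k | ∃ w, w ≠ s ∧
    k = (Finset.univ.filter (fun x => ∃ q : G.Walk s x, w ∉ q.support)).card}

end FF

namespace FF

/-- Path-restricted expected damage `E_pr(G; q, b, ∞)`: the average number of
burnt vertices over all `q`-subsets of initially burning vertices, under
optimal play by `b` path-restricted firefighters. -/
noncomputable def Epr {V : Type*} [Fintype V] [DecidableEq V]
    (G : SimpleGraph V) (q b : ℕ) : ℚ :=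
  (∑ F ∈ (Finset.univ : Finset V).powersetCard q,
      ((Fintype.card V : ℚ) - FF.PRMVS G F b)) / ((Fintype.card V).choose q)

end FF

open FF
open Fin.NatCast
open Fin.CommRing

namespace FFAux
open FF
variable {V : Type*} [Fintype V] [DecidableEq V]

lemma subset_spread (G : SimpleGraph V) (D B : Finset V) : B ⊆ spread G D B :=
  Finset.subset_union_left

lemma mem_spread {G : SimpleGraph V} {D B : Finset V} {v : V} :
    v ∈ spread G D B ↔ v ∈ B ∨ (v ∉ D ∧ ∃ u ∈ B, G.Adj u v) := by
  simp [spread]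

lemma pburnt_mono (G : SimpleGraph V) (F : Finset V) {b : ℕ} (p : ℕ → Fin b → V)
    {s t : ℕ} (h : s ≤ t) : pburnt G F p s ⊆ pburnt G F p t := by
  induction t with
  | zero => simpa [Nat.le_zero.mp h]
  | succ t ih =>
    rcases Nat.lt_or_ge s (t+1) with h'|h'
    · exact (ih (Nat.lt_succ_iff.mp h')).trans (subset_spread _ _ _)
    · have : s = t + 1 := le_antisymm h h'
      subst this; rfl

lemma init_subset_pburnt (G : SimpleGraph V) (F : Finset V) {b : ℕ} (p : ℕ → Fin b → V)
    (t : ℕ) : F ⊆ pburnt G F p t := pburnt_mono G F p (Nat.zero_le t)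

lemma mem_posDef {b : ℕ} {p : ℕ → Fin b → V} {t : ℕ} {v : V} :
    v ∈ posDef p t ↔ ∃ τ ≤ t, ∃ i, p τ i = v := by
  simp [posDef, Nat.lt_succ_iff]

lemma prmvs_le_card (G : SimpleGraph V) (F : Finset V) (b : ℕ) :
    PRMVS G F b ≤ Fintype.card V := by
  refine csSup_le' ?_
  rintro k ⟨p, -, rfl⟩
  exact Nat.sub_le _ _

lemma prmvs_le (G : SimpleGraph V) (F : Finset V) (b m : ℕ)
    (h : ∀ p : ℕ → Fin b → V, ValidPR G F p →
      m ≤ (pburnt G F p (Fintype.card V)).card) :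
    PRMVS G F b ≤ Fintype.card V - m := by
  refine csSup_le' ?_
  rintro k ⟨p, hp, rfl⟩
  exact Nat.sub_le_sub_left (h p hp) _

lemma le_prmvs (G : SimpleGraph V) (F : Finset V) (b : ℕ) (p : ℕ → Fin b → V)
    (h : ValidPR G F p) :
    Fintype.card V - (pburnt G F p (Fintype.card V)).card ≤ PRMVS G F b := by
  refine le_csSup ⟨Fintype.card V, ?_⟩ ⟨p, h, rfl⟩
  rintro k ⟨q, -, rfl⟩
  exact Nat.sub_le _ _

end FFAux

section Cycle
open FF FFAux SimpleGraph Finset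
open scoped Classical

/-- The path graph on `Fin n`. -/
def pathG (n : ℕ) : SimpleGraph (Fin n) where
  Adj u v := u.val + 1 = v.val ∨ v.val + 1 = u.val
  symm := ⟨by intro u v h; tauto⟩
  loopless := ⟨by intro u h; omega⟩

/-- The cycle graph on `Fin n`. -/
def cycG (n : ℕ) [NeZero n] : SimpleGraph (Fin n) where
  Adj u v := u ≠ v ∧ (v = u + 1 ∨ u = v + 1)
  symm := ⟨by intro u v ⟨h1, h2⟩; exact ⟨h1.symm, h2.symm⟩⟩
  loopless := ⟨by intro u h; exact h.1 rfl⟩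

lemma path_le_cyc {n : ℕ} [NeZero n] (hn : 2 ≤ n) : pathG n ≤ cycG n := by
  intro u v h
  have hu := u.isLt; have hv := v.isLt
  rcases h with h | h
  · refine ⟨by intro e; rw [e] at h; omega, Or.inl ?_⟩
    apply Fin.ext
    rw [Fin.add_def, Fin.val_one', Nat.mod_eq_of_lt (by omega : 1 < n), h]
    simp [Nat.mod_eq_of_lt hv]
  · refine ⟨by intro e; rw [e] at h; omega, Or.inr ?_⟩
    apply Fin.ext
    rw [Fin.add_def, Fin.val_one', Nat.mod_eq_of_lt (by omega : 1 < n), h]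
    simp [Nat.mod_eq_of_lt hu]

lemma pathG_connected {n : ℕ} (hn : 1 ≤ n) : (pathG n).Connected := by
  rw [connected_iff]
  have h0 : (0:ℕ) < n := hn
  refine ⟨?_, ⟨⟨0, h0⟩⟩⟩
  have key : ∀ k (hk : k < n), (pathG n).Reachable ⟨0, h0⟩ ⟨k, hk⟩ := by
    intro k
    induction k with
    | zero => intro hk; rfl
    | succ k ih =>
      intro hk
      have hk' : k < n := by omega
      exact (ih hk').trans (SimpleGraph.Adj.reachable (by left; rfl))
  intro u v
  have hu : u = ⟨u.val, u.isLt⟩ := rfl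
  have hv : v = ⟨v.val, v.isLt⟩ := rfl
  rw [hu, hv]
  exact (key u.val u.isLt).symm.trans (key v.val v.isLt)

end Cycle

section CycleStrategy
open FF FFAux SimpleGraph Finset
open scoped Classical

variable {n : ℕ} [NeZero n]

lemma exlen (F : Finset (Fin n)) (hne : F.Nonempty) (s : Fin n) :
    ∃ m : ℕ, 0 < m ∧ s + (m : Fin n) ∈ F := by
  obtain ⟨f, hf⟩ := hne
  by_cases hs : s = f
  · refine ⟨n, Nat.pos_of_ne_zero (NeZero.ne n), ?_⟩
    rw [Fin.natCast_self, add_zero, hs]; exact hf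
  · refine ⟨(f - s).val, ?_, ?_⟩
    · have h1 : f - s ≠ 0 := sub_ne_zero.mpr (Ne.symm hs)
      have h2 : (f - s).val ≠ 0 := fun h => h1 (by apply Fin.ext; simp [h])
      omega
    · rw [Fin.cast_val_eq_self, add_sub_cancel]; exact hf

/-- distance to the first fire on the right (clockwise). -/
noncomputable def flen (F : Finset (Fin n)) (hne : F.Nonempty) (s : Fin n) : ℕ :=
  Nat.find (exlen F hne s)

lemma flen_pos (F : Finset (Fin n)) (hne : F.Nonempty) (s : Fin n) :
    0 < flen F hne s := (Nat.find_spec (exlen F hne s)).1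

lemma flen_mem (F : Finset (Fin n)) (hne : F.Nonempty) (s : Fin n) :
    s + ((flen F hne s : ℕ) : Fin n) ∈ F := (Nat.find_spec (exlen F hne s)).2

lemma flen_min (F : Finset (Fin n)) (hne : F.Nonempty) (s : Fin n) {m : ℕ}
    (h0 : 0 < m) (hm : m < flen F hne s) : s + (m : Fin n) ∉ F := by
  intro hmem
  exact Nat.find_min (exlen F hne s) hm ⟨h0, hmem⟩

lemma exleft (F : Finset (Fin n)) (hne : F.Nonempty) (s : Fin n) :
    ∃ m : ℕ, 0 < m ∧ s - (m : Fin n) ∈ F := by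
  obtain ⟨f, hf⟩ := hne
  by_cases hs : s = f
  · refine ⟨n, Nat.pos_of_ne_zero (NeZero.ne n), ?_⟩
    rw [Fin.natCast_self, sub_zero, hs]; exact hf
  · refine ⟨(s - f).val, ?_, ?_⟩
    · have h1 : s - f ≠ 0 := sub_ne_zero.mpr hs
      have h2 : (s - f).val ≠ 0 := fun h => h1 (by apply Fin.ext; simp [h])
      omega
    · rw [Fin.cast_val_eq_self, sub_sub_cancel]; exact hf

/-- distance to the first fire on the left. -/
noncomputable def lenL (F : Finset (Fin n)) (hne : F.Nonempty) (s : Fin n) : ℕ :=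
  Nat.find (exleft F hne s)

lemma lenL_pos (F : Finset (Fin n)) (hne : F.Nonempty) (s : Fin n) :
    0 < lenL F hne s := (Nat.find_spec (exleft F hne s)).1

lemma lenL_mem (F : Finset (Fin n)) (hne : F.Nonempty) (s : Fin n) :
    s - ((lenL F hne s : ℕ) : Fin n) ∈ F := (Nat.find_spec (exleft F hne s)).2

lemma lenL_min (F : Finset (Fin n)) (hne : F.Nonempty) (s : Fin n) {m : ℕ}
    (h0 : 0 < m) (hm : m < lenL F hne s) : s - (m : Fin n) ∉ F := by
  intro hmem
  exact Nat.find_min (exleft F hne s) hm ⟨h0, hmem⟩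

end CycleStrategy

section CycleStrategy2
open FF FFAux SimpleGraph Finset
open scoped Classical

variable {n : ℕ} [NeZero n]

lemma cast_succ_fin (e : ℕ) (he : 1 ≤ e) :
    ((e - 1 : ℕ) : Fin n) + 1 = ((e : ℕ) : Fin n) := by
  have h : e - 1 + 1 = e := by omega
  calc ((e - 1 : ℕ) : Fin n) + 1 = ((e - 1 + 1 : ℕ) : Fin n) := by push_cast; ring
    _ = ((e : ℕ) : Fin n) := by rw [h]

/-- Arc starts: unburnt vertices whose left neighbour is on fire. -/
def arcStart (F : Finset (Fin n)) : Finset (Fin n) :=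
  univ.filter (fun v => v ∉ F ∧ v - 1 ∈ F)

/-- Arc right-ends of arcs of length at least two. -/
def arcEndB (F : Finset (Fin n)) : Finset (Fin n) :=
  univ.filter (fun v => v ∉ F ∧ v + 1 ∈ F ∧ v - 1 ∉ F)

lemma mem_arcStart {F : Finset (Fin n)} {v : Fin n} :
    v ∈ arcStart F ↔ v ∉ F ∧ v - 1 ∈ F := by simp [arcStart]

lemma mem_arcEndB {F : Finset (Fin n)} {v : Fin n} :
    v ∈ arcEndB F ↔ v ∉ F ∧ v + 1 ∈ F ∧ v - 1 ∉ F := by simp [arcEndB]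

lemma exists_not_mem_of_card_lt {F : Finset (Fin n)} (h : F.card < n) :
    ∃ v, v ∉ F := by
  by_contra hc
  push_neg at hc
  have : F = univ := Finset.eq_univ_iff_forall.mpr hc
  rw [this, Finset.card_univ, Fintype.card_fin] at h
  omega

lemma startOf_mem (F : Finset (Fin n)) (hne : F.Nonempty) {v : Fin n} (hv : v ∉ F) :
    (v - ((lenL F hne v - 1 : ℕ) : Fin n)) ∈ arcStart F := by
  set e := lenL F hne v with he
  have epos : 0 < e := lenL_pos F hne v
  rw [mem_arcStart]
  constructor
  · rcases Nat.eq_or_lt_of_le epos with h1 | h1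
    · simpa [← h1] using hv
    · exact lenL_min F hne v (by omega) (by omega)
  · rw [sub_sub, cast_succ_fin e epos]
    exact lenL_mem F hne v

lemma arcStart_nonempty (F : Finset (Fin n)) (hne : F.Nonempty) (hcard : F.card < n) :
    (arcStart F).Nonempty := by
  obtain ⟨v, hv⟩ := exists_not_mem_of_card_lt hcard
  exact ⟨_, startOf_mem F hne hv⟩

lemma card_arcStart_le (F : Finset (Fin n)) : (arcStart F).card ≤ F.card := by
  apply Finset.card_le_card_of_injOn (fun v => v - 1)
  · intro v hv; exact (mem_arcStart.mp hv).2
  · intro u _ v _ h; exact sub_left_injective h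

lemma card_arcEndB_le (F : Finset (Fin n)) : (arcEndB F).card ≤ F.card := by
  apply Finset.card_le_card_of_injOn (fun v => v + 1)
  · intro v hv; exact (mem_arcEndB.mp hv).2.1
  · intro u _ v _ h; exact add_left_injective 1 h

lemma flen_lt (F : Finset (Fin n)) (hne : F.Nonempty) {s : Fin n} (hs : s ∉ F) :
    flen F hne s < n := by
  obtain ⟨f, hf⟩ := id hne
  have hsf : s ≠ f := fun h => hs (h ▸ hf)
  have h1 : f - s ≠ 0 := sub_ne_zero.mpr hsf.symm
  have h2 : (f - s).val ≠ 0 := fun h => h1 (by apply Fin.ext; simp [h])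
  have h3 : flen F hne s ≤ (f - s).val := by
    apply Nat.find_min' (exlen F hne s)
    exact ⟨by omega, by rw [Fin.cast_val_eq_self, add_sub_cancel]; exact hf⟩
  exact lt_of_le_of_lt h3 (f - s).isLt

lemma arc_not_mem (F : Finset (Fin n)) (hne : F.Nonempty) {s : Fin n} (hs : s ∉ F)
    {j : ℕ} (hj : j < flen F hne s) : s + (j : Fin n) ∉ F := by
  rcases Nat.eq_zero_or_pos j with h | h
  · simpa [h] using hs
  · exact flen_min F hne s h hj

end CycleStrategy2

section CycleStrategy3
open FF FFAux SimpleGraph Finset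
open scoped Classical

variable {n : ℕ} [NeZero n]

lemma one_ne_zero_fin (hn : 2 ≤ n) : (1 : Fin n) ≠ 0 := by
  intro h
  have := congrArg Fin.val h
  rw [Fin.val_one'] at this
  simp at this
  omega

lemma arcEndB_struct (F : Finset (Fin n)) (hne : F.Nonempty) {r : Fin n}
    (hr : r ∈ arcEndB F) :
    ∃ s ∈ arcStart F, 2 ≤ flen F hne s ∧
      r = s + ((flen F hne s - 1 : ℕ) : Fin n) := by
  obtain ⟨hrF, hr1, hr2⟩ := mem_arcEndB.mp hr
  have epos : 0 < lenL F hne r := lenL_pos F hne r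
  have he2 : 2 ≤ lenL F hne r := by
    rcases Nat.lt_or_ge (lenL F hne r) 2 with h | h
    · exfalso
      have h1 : lenL F hne r = 1 := by omega
      have := lenL_mem F hne r
      rw [h1, Nat.cast_one] at this
      exact hr2 this
    · exact h
  set e := lenL F hne r with hedef
  set s := r - ((e - 1 : ℕ) : Fin n) with hsdef
  have hsS : s ∈ arcStart F := startOf_mem F hne hrF
  have harc : ∀ m : ℕ, m ≤ e - 1 → s + (m : Fin n) = r - ((e - 1 - m : ℕ) : Fin n) := by
    intro m hm
    rw [hsdef]
    rw [show ((e - 1 : ℕ) : Fin n) = ((e - 1 - m : ℕ) : Fin n) + ((m : ℕ) : Fin n) by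
      rw [← Nat.cast_add]; congr 1; omega]
    ring
  have hse : s + ((e : ℕ) : Fin n) = r + 1 := by
    rw [hsdef, ← cast_succ_fin e epos]
    ring
  have hflenle : flen F hne s ≤ e := by
    apply Nat.find_min' (exlen F hne s)
    exact ⟨epos, by rw [hse]; exact hr1⟩
  have hflen : flen F hne s = e := by
    rcases Nat.lt_or_ge (flen F hne s) e with h | h
    · exfalso
      have hl0 : 0 < flen F hne s := flen_pos F hne s
      have hmem := flen_mem F hne s
      rw [harc _ (by omega)] at hmem
      rcases Nat.eq_zero_or_pos (e - 1 - flen F hne s) with h0 | h0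
      · rw [h0, Nat.cast_zero, sub_zero] at hmem
        exact hrF hmem
      · exact lenL_min F hne r h0 (by omega) hmem
    · omega
  refine ⟨s, hsS, by omega, ?_⟩
  rw [hflen, harc (e - 1) le_rfl]
  simp

lemma exists_image_eq {α : Type*} [DecidableEq α] (S : Finset α) (hS : S.Nonempty)
    {b : ℕ} (hb : S.card ≤ b) : ∃ a : Fin b → α, Finset.univ.image a = S := by
  obtain ⟨s₀, hs₀⟩ := id hS
  refine ⟨fun i => S.toList.getD i.val s₀, ?_⟩
  apply Finset.ext
  intro x
  simp only [Finset.mem_image, Finset.mem_univ, true_and]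
  constructor
  · rintro ⟨i, rfl⟩
    rcases Nat.lt_or_ge i.val S.toList.length with h | h
    · rw [List.getD_eq_getElem _ _ h]
      exact Finset.mem_toList.mp (List.getElem_mem _)
    · rw [List.getD_eq_default _ _ h]
      exact hs₀
  · intro hx
    have hxl : x ∈ S.toList := Finset.mem_toList.mpr hx
    obtain ⟨k, hk, hkx⟩ := List.getElem_of_mem hxl
    have hkb : k < b := lt_of_lt_of_le (by rwa [Finset.length_toList] at hk) hb
    refine ⟨⟨k, hkb⟩, ?_⟩
    rw [List.getD_eq_getElem _ _ (by simpa using hk)]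
    exact hkx

lemma arc_walk (hn : 3 ≤ n) (s : Fin n) (j : ℕ) :
    ∃ w : (cycG n).Walk s (s + (j : Fin n)),
      ∀ v ∈ w.support, ∃ j' ≤ j, v = s + ((j' : ℕ) : Fin n) := by
  induction j with
  | zero =>
    refine ⟨SimpleGraph.Walk.nil.copy rfl (by simp), ?_⟩
    intro v hv
    rw [SimpleGraph.Walk.support_copy] at hv
    simp at hv
    exact ⟨0, le_rfl, by simp [hv]⟩
  | succ j ih =>
    obtain ⟨w, hw⟩ := ih
    have he : ((j + 1 : ℕ) : Fin n) = ((j : ℕ) : Fin n) + 1 := by push_cast; ring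
    have hadj : (cycG n).Adj (s + (j : Fin n)) (s + ((j + 1 : ℕ) : Fin n)) := by
      rw [he, ← add_assoc]
      refine ⟨?_, Or.inl rfl⟩
      intro hcon
      have : (1 : Fin n) = 0 := by
        have := (left_eq_add (a := s + ((j : ℕ) : Fin n))).mp hcon
        exact this
      exact one_ne_zero_fin (by omega) this
    refine ⟨w.concat hadj, ?_⟩
    intro v hv
    rw [SimpleGraph.Walk.support_concat, List.mem_append] at hv
    rcases hv with h | h
    rotate_left
    · rw [List.mem_singleton] at h
      subst h
      exact ⟨j + 1, le_rfl, rfl⟩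
    · obtain ⟨j', hj', rfl⟩ := hw v h
      exact ⟨j', by omega, rfl⟩

end CycleStrategy3

section CycleMain
open FF FFAux SimpleGraph Finset
open scoped Classical

lemma cycG_adj {n : ℕ} [NeZero n] {u v : Fin n} :
    (cycG n).Adj u v ↔ u ≠ v ∧ (v = u + 1 ∨ u = v + 1) := Iff.rfl

lemma cycle_prmvs {n b : ℕ} [NeZero n] (hn : 3 ≤ n) (hb : 1 ≤ b)
    (F : Finset (Fin n)) (hFc : F.card = b) (hbn : b < n) :
    n - 2 * b ≤ PRMVS (cycG n) F b := by
  have hne : F.Nonempty := Finset.card_pos.mp (by omega)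
  have hone : (1 : Fin n) ≠ 0 := one_ne_zero_fin (by omega)
  have hSne : (arcStart F).Nonempty := arcStart_nonempty F hne (by omega)
  have hScard : (arcStart F).card ≤ b := by rw [← hFc]; exact card_arcStart_le F
  obtain ⟨a, ha⟩ := exists_image_eq (arcStart F) hSne hScard
  have haS : ∀ i, a i ∈ arcStart F := fun i =>
    ha ▸ Finset.mem_image_of_mem a (Finset.mem_univ i)
  classical
  set tgt : Fin n → Fin n := fun s => s + ((flen F hne s - 2 : ℕ) : Fin n) with htgt
  set p : ℕ → Fin b → Fin n := fun t => if t = 0 then a else fun i => tgt (a i) with hp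
  set T : Finset (Fin n) := Finset.univ.image (fun i => tgt (a i)) with hT
  set S : Finset (Fin n) := arcStart F with hS
  set R : Finset (Fin n) := arcEndB F with hR
  -- basic membership facts
  have hS_not_F : ∀ s ∈ S, s ∉ F := fun s hs => (mem_arcStart.mp hs).1
  have hS_not_R : ∀ s ∈ S, s ∉ R := by
    intro s hs hr
    exact (mem_arcEndB.mp hr).2.2 (mem_arcStart.mp hs).2
  have htgt_not : ∀ s ∈ S, tgt s ∉ F ∪ R := by
    intro s hs
    obtain ⟨hsF, hsF1⟩ := mem_arcStart.mp hs
    rcases Nat.lt_or_ge (flen F hne s) 2 with hl | hl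
    · have h1 : flen F hne s - 2 = 0 := by omega
      rw [Finset.mem_union]
      push_neg
      rw [htgt]
      simp only [h1, Nat.cast_zero, add_zero]
      exact ⟨hsF, hS_not_R s hs⟩
    · rw [Finset.mem_union]
      push_neg
      constructor
      · exact arc_not_mem F hne hsF (by omega)
      · intro hrr
        obtain ⟨-, h1, -⟩ := mem_arcEndB.mp hrr
        have hcast : ((flen F hne s - 2 : ℕ) : Fin n) + 1
            = ((flen F hne s - 1 : ℕ) : Fin n) := by
          have h := cast_succ_fin (n := n) (flen F hne s - 1) (by omega)
          rwa [show flen F hne s - 1 - 1 = flen F hne s - 2 by omega] at h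
        rw [show tgt s = s + ((flen F hne s - 2 : ℕ) : Fin n) from rfl,
          add_assoc, hcast] at h1
        exact flen_min F hne s (by omega) (by omega) h1
  -- defended sets
  have hpd0 : posDef p 0 = S := by
    rw [posDef]
    simp [hp, ha]
  have hpdt : ∀ t : ℕ, 1 ≤ t → posDef p t = S ∪ T := by
    intro t ht
    apply Finset.ext
    intro v
    rw [mem_posDef, Finset.mem_union]
    constructor
    · rintro ⟨τ, hτ, i, rfl⟩
      by_cases h0 : τ = 0
      · subst h0
        left
        have he : p 0 i = a i := by simp [hp]
        rw [he, ← ha]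
        exact Finset.mem_image_of_mem _ (Finset.mem_univ _)
      · right
        have he : p τ i = tgt (a i) := by simp [hp, h0]
        rw [he, hT]
        exact Finset.mem_image_of_mem _ (Finset.mem_univ _)
    · rintro (hv | hv)
      · rw [← ha] at hv
        obtain ⟨i, -, rfl⟩ := Finset.mem_image.mp hv
        exact ⟨0, by omega, i, by simp [hp]⟩
      · rw [hT] at hv
        obtain ⟨i, -, rfl⟩ := Finset.mem_image.mp hv
        exact ⟨1, ht, i, by simp [hp]⟩
  have hSpd : ∀ t, S ⊆ posDef p t := by
    intro t
    rcases Nat.eq_zero_or_pos t with h | h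
    · rw [h, hpd0]
    · rw [hpdt t h]; exact Finset.subset_union_left
  -- key: r - 1 is defended for arcs of length ≥ 2
  have hRd : ∀ r ∈ R, r - 1 ∈ S ∪ T := by
    intro r hr
    obtain ⟨s, hs, hl2, rfl⟩ := arcEndB_struct F hne hr
    have hcast : ((flen F hne s - 2 : ℕ) : Fin n) + 1
        = ((flen F hne s - 1 : ℕ) : Fin n) := by
      have h := cast_succ_fin (n := n) (flen F hne s - 1) (by omega)
      rwa [show flen F hne s - 1 - 1 = flen F hne s - 2 by omega] at h
    have heq : s + ((flen F hne s - 1 : ℕ) : Fin n) - 1 = tgt s := by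
      rw [show tgt s = s + ((flen F hne s - 2 : ℕ) : Fin n) from rfl, ← hcast]
      ring
    rw [heq]
    apply Finset.mem_union_right
    rw [← hS, ← ha] at hs
    obtain ⟨i, -, rfl⟩ := Finset.mem_image.mp hs
    exact Finset.mem_image_of_mem _ (Finset.mem_univ i)
  -- burnt set computations
  have hb1 : pburnt (cycG n) F p 1 = F ∪ R := by
    show spread (cycG n) (posDef p 0) (pburnt (cycG n) F p 0) = F ∪ R
    rw [hpd0]
    show spread (cycG n) S F = F ∪ R
    apply Finset.ext
    intro v
    rw [mem_spread, Finset.mem_union]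
    constructor
    · rintro (hv | ⟨hvS, u, hu, hne', hadj⟩)
      · exact Or.inl hv
      · by_cases hvF : v ∈ F
        · exact Or.inl hvF
        rcases hadj with rfl | rfl
        · exfalso
          exact hvS (mem_arcStart.mpr ⟨hvF, by simpa using hu⟩)
        · by_cases hv1 : v - 1 ∈ F
          · exact absurd (mem_arcStart.mpr ⟨hvF, hv1⟩) hvS
          · exact Or.inr (mem_arcEndB.mpr ⟨hvF, hu, hv1⟩)
    · rintro (hv | hv)
      · exact Or.inl hv
      · obtain ⟨hvF, hv1, hv2⟩ := mem_arcEndB.mp hv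
        right
        refine ⟨fun hvS => hv2 (mem_arcStart.mp hvS).2, v + 1, hv1, ?_⟩
        exact (SimpleGraph.Adj.symm (G := cycG n) (u := v) (v := v + 1) ⟨fun h => hone (by simpa using h.symm), Or.inl rfl⟩)
  have hstab : ∀ t : ℕ, 1 ≤ t → pburnt (cycG n) F p t = F ∪ R := by
    intro t
    induction t with
    | zero => omega
    | succ t ih =>
      intro _
      rcases Nat.eq_zero_or_pos t with h0 | h0
      · rw [h0]; exact hb1
      show spread (cycG n) (posDef p t) (pburnt (cycG n) F p t) = F ∪ R
      rw [ih h0, hpdt t h0]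
      apply Finset.ext
      intro v
      rw [mem_spread]
      constructor
      · rintro (hv | ⟨hvD, u, hu, hne', hadj⟩)
        · exact hv
        by_cases hvB : v ∈ F ∪ R
        · exact hvB
        exfalso
        rw [Finset.mem_union] at hvB
        push_neg at hvB
        obtain ⟨hvF, hvR⟩ := hvB
        rw [Finset.mem_union] at hu
        rcases hu with hu | hu
        · rcases hadj with rfl | rfl
          · exact hvD (Finset.mem_union_left _ (mem_arcStart.mpr ⟨hvF, by simpa using hu⟩))
          · by_cases hv1 : v - 1 ∈ F
            · exact hvD (Finset.mem_union_left _ (mem_arcStart.mpr ⟨hvF, hv1⟩))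
            · exact hvR (mem_arcEndB.mpr ⟨hvF, hu, hv1⟩)
        · rcases hadj with rfl | rfl
          · exact hvF ((mem_arcEndB.mp hu).2.1)
          · have h9 := hRd _ hu
            rw [add_sub_cancel_right] at h9
            exact hvD h9
      · intro hv
        exact Or.inl hv
  -- validity
  have hvalid : ValidPR (cycG n) F p := by
    constructor
    · intro t i
      rcases Nat.eq_zero_or_pos t with h0 | h0
      · rw [h0]
        show a i ∉ F
        exact hS_not_F _ (haS i)
      · have hpt : p t i = tgt (a i) := by
          simp [hp, Nat.pos_iff_ne_zero.mp h0]
        rw [hstab t h0, hpt]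
        exact htgt_not _ (haS i)
    · intro t i
      rcases Nat.eq_zero_or_pos t with h0 | h0
      · subst h0
        have hp0 : p 0 i = a i := by simp [hp]
        have hp1 : p 1 i = tgt (a i) := by simp [hp]
        obtain ⟨w, hw⟩ := arc_walk hn (a i) (flen F hne (a i) - 2)
        refine ⟨(w.copy hp0.symm hp1.symm), ?_⟩
        intro v hv
        rw [SimpleGraph.Walk.support_copy] at hv
        obtain ⟨j', hj', rfl⟩ := hw v hv
        rw [hb1]
        obtain ⟨hsF, hsF1⟩ := mem_arcStart.mp (haS i)
        have hlpos : 0 < flen F hne (a i) := flen_pos F hne (a i)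
        rw [Finset.mem_union]
        push_neg
        constructor
        · exact arc_not_mem F hne hsF (by omega)
        · intro hrr
          obtain ⟨-, h1, h2⟩ := mem_arcEndB.mp hrr
          rcases Nat.eq_zero_or_pos j' with hj0 | hj0
          · subst hj0
            simp only [Nat.cast_zero, add_zero] at h2
            exact h2 hsF1
          · rw [show a i + ((j' : ℕ) : Fin n) + 1 = a i + ((j' + 1 : ℕ) : Fin n) by
              push_cast; ring] at h1
            exact flen_min F hne (a i) (by omega) (by omega) h1
      · have hpt : p t i = tgt (a i) := by
          simp [hp, Nat.pos_iff_ne_zero.mp h0]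
        have hpt1 : p (t + 1) i = tgt (a i) := by
          simp [hp]
        refine ⟨SimpleGraph.Walk.nil.copy hpt.symm hpt1.symm, ?_⟩
        intro v hv
        rw [SimpleGraph.Walk.support_copy] at hv
        simp only [SimpleGraph.Walk.support_nil, List.mem_singleton] at hv
        subst hv
        rw [hstab (t + 1) (by omega)]
        exact htgt_not _ (haS i)
  -- conclude
  have hcard : (pburnt (cycG n) F p n).card ≤ 2 * b := by
    rw [hstab n (by omega)]
    have h9 : R.card ≤ F.card := card_arcEndB_le F
    calc (F ∪ R).card ≤ F.card + R.card := Finset.card_union_le _ _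
      _ ≤ 2 * b := by omega
  have hfin := le_prmvs (cycG n) F b p hvalid
  rw [Fintype.card_fin] at hfin
  omega

end CycleMain

section PathSide
open FF FFAux SimpleGraph Finset
open scoped Classical

variable {V : Type*} [Fintype V] [DecidableEq V]

lemma fire_spreads {G : SimpleGraph V} {F : Finset V} {b : ℕ} {p : ℕ → Fin b → V}
    {t : ℕ} {u v : V} (hu : u ∈ pburnt G F p t) (hadj : G.Adj u v)
    (hnd : v ∉ posDef p t) : v ∈ pburnt G F p (t + 1) := by
  show v ∈ spread G (posDef p t) (pburnt G F p t)
  rw [mem_spread]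
  exact Or.inr ⟨hnd, u, hu, hadj⟩

lemma not_posDef_of_never {b : ℕ} {p : ℕ → Fin b → V} {t : ℕ} {v : V}
    (h : ∀ τ i, p τ i ≠ v) : v ∉ posDef p t := by
  rw [mem_posDef]
  rintro ⟨τ, -, i, hpi⟩
  exact h τ i hpi

lemma trajectory {G : SimpleGraph V} {F : Finset V} {b : ℕ} {p : ℕ → Fin b → V}
    (hp : ValidPR G F p) (i : Fin b) (t : ℕ) :
    ∃ w : G.Walk (p 0 i) (p t i), ∀ v ∈ w.support, v ∉ F := by
  induction t with
  | zero =>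
    refine ⟨SimpleGraph.Walk.nil, ?_⟩
    intro v hv
    simp only [SimpleGraph.Walk.support_nil, List.mem_singleton] at hv
    subst hv
    exact hp.1 0 i
  | succ t ih =>
    obtain ⟨w, hw⟩ := ih
    obtain ⟨w', hw'⟩ := hp.2 t i
    refine ⟨w.append w', ?_⟩
    intro v hv
    rw [SimpleGraph.Walk.mem_support_append_iff] at hv
    rcases hv with hv | hv
    · exact hw v hv
    · exact fun hvF => hw' v hv (init_subset_pburnt G F p (t + 1) hvF)

lemma path_walk_ivt {n : ℕ} : ∀ {u v : Fin n} (w : (pathG n).Walk u v) (c : ℕ),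
    u.val ≤ c → c ≤ v.val → ∃ z ∈ w.support, z.val = c := by
  intro u v w
  induction w with
  | @nil a =>
    intro c h1 h2
    exact ⟨a, by simp, by omega⟩
  | @cons a x y hadj w ih =>
    intro c h1 h2
    rcases Nat.eq_or_lt_of_le h1 with h | h
    · exact ⟨a, by simp, h⟩
    · have hx : x.val ≤ c := by
        rcases hadj with h' | h' <;> omega
      obtain ⟨z, hz, hzc⟩ := ih c hx h2
      exact ⟨z, by simp [hz], hzc⟩

lemma path_walk_ivt' {n : ℕ} {u v : Fin n} (w : (pathG n).Walk u v) (c : ℕ)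
    (h1 : v.val ≤ c) (h2 : c ≤ u.val) : ∃ z ∈ w.support, z.val = c := by
  obtain ⟨z, hz, hzc⟩ := path_walk_ivt w.reverse c h1 h2
  rw [SimpleGraph.Walk.support_reverse, List.mem_reverse] at hz
  exact ⟨z, hz, hzc⟩

end PathSide

section PathMain
open FF FFAux SimpleGraph Finset
open scoped Classical

lemma path_burn {n b m : ℕ} [NeZero n] (hb : 1 ≤ b) (hm : 1 ≤ m)
    (x : ℕ → Fin n) (F : Finset (Fin n))
    (hF : F = (Finset.range b).image x)
    (hmono : ∀ i j, i < j → j < b → (x i).val < (x j).val)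
    (h0 : m ≤ (x 0).val)
    (hgap : ∀ i, i + 1 < b → (x i).val + m + 1 ≤ (x (i + 1)).val)
    (hlast : (x (b - 1)).val + m < n)
    (p : ℕ → Fin b → Fin n) (hp : ValidPR (pathG n) F p) :
    m ≤ (pburnt (pathG n) F p n).card := by
  have hmn : m ≤ n := le_trans h0 (le_of_lt (x 0).isLt)
  have hmono' : ∀ i j, i ≤ j → j < b → (x i).val ≤ (x j).val := by
    intro i j hij hj
    rcases Nat.eq_or_lt_of_le hij with h | h
    · rw [h]
    · exact le_of_lt (hmono i j h hj)
  set lo : ℕ → ℕ := fun j => if j = 0 then (x 0).val - m else (x (j - 1)).val + 1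
    with hlo
  have hlo_bound : ∀ j, j ≤ b → lo j + m ≤ n := by
    intro j hj
    rcases Nat.eq_zero_or_pos j with h | h
    · subst h
      simp only [hlo, if_pos rfl]
      have := (x 0).isLt
      omega
    · simp only [hlo, if_neg (by omega : j ≠ 0)]
      rcases Nat.lt_or_ge j b with h2 | h2
      · have := hgap (j - 1) (by omega)
        have h3 := hmono' j (b - 1) (by omega) (by omega)
        rw [show j - 1 + 1 = j by omega] at this
        omega
      · have hjb : j = b := by omega
        subst hjb
        omega
  set I : ℕ → Finset (Fin n) :=
    fun j => (Finset.range m).image (fun k => ((lo j + k : ℕ) : Fin n)) with hI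
  have hval : ∀ j, j ≤ b → ∀ k, k < m → ((lo j + k : ℕ) : Fin n).val = lo j + k := by
    intro j hj k hk
    rw [Fin.val_natCast]
    exact Nat.mod_eq_of_lt (by have := hlo_bound j hj; omega)
  have hmemI : ∀ j k, k < m → ((lo j + k : ℕ) : Fin n) ∈ I j := by
    intro j k hk
    rw [hI]
    exact Finset.mem_image_of_mem _ (Finset.mem_range.mpr hk)
  have hIcard : ∀ j, j ≤ b → (I j).card = m := by
    intro j hj
    rw [hI]
    rw [Finset.card_image_of_injOn, Finset.card_range]
    intro k1 h1 k2 h2 he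
    have hk1 := Finset.mem_range.mp h1
    have hk2 := Finset.mem_range.mp h2
    have hvv := congrArg Fin.val he
    rw [hval j hj k1 hk1, hval j hj k2 hk2] at hvv
    omega
  have hImem : ∀ j, j ≤ b → ∀ v ∈ I j, lo j ≤ v.val ∧ v.val < lo j + m := by
    intro j hj v hv
    rw [hI] at hv
    obtain ⟨k, hk, rfl⟩ := Finset.mem_image.mp hv
    rw [hval j hj k (Finset.mem_range.mp hk)]
    have := Finset.mem_range.mp hk
    omega
  have hIlt : ∀ j, j < b → ∀ v ∈ I j, v.val < (x j).val := by
    intro j hjb v hv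
    obtain ⟨hlov, hvlt⟩ := hImem j (le_of_lt hjb) v hv
    rcases Nat.eq_zero_or_pos j with h | h
    · subst h
      simp only [hlo, if_pos rfl] at hvlt
      omega
    · simp only [hlo, if_neg (by omega : j ≠ 0)] at hvlt
      have := hgap (j - 1) (by omega)
      rw [show j - 1 + 1 = j by omega] at this
      omega
  have hIgt : ∀ j, 1 ≤ j → j ≤ b → ∀ v ∈ I j, (x (j - 1)).val < v.val := by
    intro j h1 hj v hv
    have := (hImem j hj v hv).1
    simp only [hlo, if_neg (by omega : j ≠ 0)] at this
    omega
  -- separation of firefighters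
  have hsep : ∀ (i : Fin b) (t t' j j' : ℕ), j < j' → j' ≤ b →
      p t i ∈ I j → p t' i ∈ I j' → False := by
    intro i t t' j j' hjj hj'b ht ht'
    obtain ⟨w1, hw1⟩ := trajectory hp i t
    obtain ⟨w2, hw2⟩ := trajectory hp i t'
    have hjb : j < b := by omega
    have hu : (p t i).val < (x j).val := hIlt j hjb _ ht
    have hv : (x j).val < (p t' i).val := by
      have hgt := hIgt j' (by omega) hj'b _ ht'
      have h2 := hmono' j (j' - 1) (by omega) (by omega)
      omega
    obtain ⟨z, hz, hzc⟩ := path_walk_ivt (w1.reverse.append w2) ((x j).val)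
      (by omega) (by omega)
    have hzx : z = x j := Fin.ext hzc
    rw [SimpleGraph.Walk.mem_support_append_iff] at hz
    have hzF : z ∈ F := by
      rw [hzx, hF]
      exact Finset.mem_image_of_mem _ (Finset.mem_range.mpr hjb)
    rcases hz with hz | hz
    · rw [SimpleGraph.Walk.support_reverse, List.mem_reverse] at hz
      exact hw1 z hz hzF
    · exact hw2 z hz hzF
  -- pigeonhole: some interval is never defended
  have hfree : ∃ j, j ≤ b ∧ ∀ (t : ℕ) (i : Fin b), p t i ∉ I j := by
    by_contra hc
    push_neg at hc
    have hc' : ∀ j ∈ Finset.range (b + 1), ∃ i : Fin b, ∃ t, p t i ∈ I j := by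
      intro j hj
      obtain ⟨t, i, h⟩ := hc j (by simpa [Nat.lt_succ_iff] using hj)
      exact ⟨i, t, h⟩
    choose f hf using hc'
    set g : ℕ → Fin b := fun j =>
      if hj : j ∈ Finset.range (b + 1) then f j hj else ⟨0, hb⟩ with hg
    obtain ⟨j, hj, j', hj', hne, heq⟩ :=
      Finset.exists_ne_map_eq_of_card_lt_of_maps_to
        (s := Finset.range (b + 1)) (t := Finset.univ) (f := g)
        (by simp) (fun j _ => Finset.mem_univ _)
    obtain ⟨t1, h1⟩ := hf j hj
    obtain ⟨t2, h2⟩ := hf j' hj'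
    rw [show f j hj = g j by rw [hg]; simp [hj]] at h1
    rw [show f j' hj' = g j' by rw [hg]; simp [hj']] at h2
    rw [heq] at h1
    rcases Nat.lt_or_ge j j' with hlt | hge
    · exact hsep (g j') t1 t2 j j' hlt (by simpa [Nat.lt_succ_iff] using hj') h1 h2
    · exact hsep (g j') t2 t1 j' j (by omega) (by simpa [Nat.lt_succ_iff] using hj) h2 h1
  obtain ⟨js, hjs, hjfree⟩ := hfree
  have hnd : ∀ (t : ℕ) (v : Fin n), v ∈ I js → v ∉ posDef p t := by
    intro t v hv
    apply not_posDef_of_never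
    intro τ i he
    exact hjfree τ i (he ▸ hv)
  -- the undefended interval burns completely
  have hburnsub : I js ⊆ pburnt (pathG n) F p n := by
    rcases Nat.eq_zero_or_pos js with hjs0 | hjs0
    · subst hjs0
      have hlo0 : lo 0 = (x 0).val - m := by simp [hlo]
      have hchain : ∀ k, k < m →
          ((lo 0 + (m - 1 - k) : ℕ) : Fin n) ∈ pburnt (pathG n) F p (k + 1) := by
        intro k
        induction k with
        | zero =>
          intro hk
          apply fire_spreads (u := x 0)
          · show x 0 ∈ F
            rw [hF]
            exact Finset.mem_image_of_mem _ (Finset.mem_range.mpr (by omega))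
          · show _ ∨ _
            right
            rw [hval 0 (by omega) (m - 1 - 0) (by omega)]
            omega
          · exact hnd 0 _ (hmemI 0 _ (by omega))
        | succ k ih =>
          intro hk
          apply fire_spreads (u := ((lo 0 + (m - 1 - k) : ℕ) : Fin n)) (ih (by omega))
          · show _ ∨ _
            right
            rw [hval 0 (by omega) (m - 1 - k) (by omega),
              hval 0 (by omega) (m - 1 - (k + 1)) (by omega)]
            omega
          · exact hnd (k + 1) _ (hmemI 0 _ (by omega))
      intro v hv
      rw [hI] at hv
      obtain ⟨k, hk, rfl⟩ := Finset.mem_image.mp hv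
      have hkm := Finset.mem_range.mp hk
      have hkk : m - 1 - (m - 1 - k) = k := by omega
      have := hchain (m - 1 - k) (by omega)
      rw [hkk] at this
      exact pburnt_mono (pathG n) F p (by omega) this
    · have hlojs : lo js = (x (js - 1)).val + 1 := by
        simp [hlo, Nat.pos_iff_ne_zero.mp hjs0]
      have hchain : ∀ k, k < m →
          ((lo js + k : ℕ) : Fin n) ∈ pburnt (pathG n) F p (k + 1) := by
        intro k
        induction k with
        | zero =>
          intro hk
          apply fire_spreads (u := x (js - 1))
          · show x (js - 1) ∈ F
            rw [hF]
            exact Finset.mem_image_of_mem _ (Finset.mem_range.mpr (by omega))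
          · show _ ∨ _
            left
            rw [hval js hjs 0 (by omega)]
            omega
          · exact hnd 0 _ (hmemI js _ (by omega))
        | succ k ih =>
          intro hk
          apply fire_spreads (u := ((lo js + k : ℕ) : Fin n)) (ih (by omega))
          · show _ ∨ _
            left
            rw [hval js hjs k (by omega), hval js hjs (k + 1) (by omega)]
            omega
          · exact hnd (k + 1) _ (hmemI js _ (by omega))
      intro v hv
      rw [hI] at hv
      obtain ⟨k, hk, rfl⟩ := Finset.mem_image.mp hv
      have hkm := Finset.mem_range.mp hk
      exact pburnt_mono (pathG n) F p (by omega) (hchain k hkm)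
  calc m = (I js).card := (hIcard js hjs).symm
    _ ≤ (pburnt (pathG n) F p n).card := Finset.card_le_card hburnsub

end PathMain

section Counting
open FF FFAux SimpleGraph Finset
open scoped Classical

lemma path_prmvs {n b m : ℕ} [NeZero n] (hb : 1 ≤ b) (hm : 1 ≤ m)
    (x : ℕ → Fin n) (F : Finset (Fin n))
    (hF : F = (Finset.range b).image x)
    (hmono : ∀ i j, i < j → j < b → (x i).val < (x j).val)
    (h0 : m ≤ (x 0).val)
    (hgap : ∀ i, i + 1 < b → (x i).val + m + 1 ≤ (x (i + 1)).val)
    (hlast : (x (b - 1)).val + m < n) :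
    PRMVS (pathG n) F b ≤ n - m := by
  have h := prmvs_le (pathG n) F b m ?_
  · rwa [Fintype.card_fin] at h
  · intro p hp
    rw [Fintype.card_fin]
    exact path_burn hb hm x F hF hmono h0 hgap hlast p hp

lemma fin_filter_lt_card {n : ℕ} [NeZero n] (a : ℕ) (ha : a ≤ n) :
    ((Finset.univ : Finset (Fin n)).filter (fun v => v.val < a)).card = a := by
  have he : (Finset.univ : Finset (Fin n)).filter (fun v => v.val < a)
      = Finset.image (Nat.cast : ℕ → Fin n) (Finset.range a) := by
    ext v
    simp only [Finset.mem_filter, Finset.mem_univ, true_and, Finset.mem_image,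
      Finset.mem_range]
    constructor
    · intro hv
      exact ⟨v.val, hv, Fin.cast_val_eq_self v⟩
    · rintro ⟨k, hk, rfl⟩
      rw [Fin.val_natCast]
      exact lt_of_le_of_lt (Nat.mod_le _ _) hk
  rw [he, Finset.card_image_of_injOn, Finset.card_range]
  intro k1 hk1 k2 hk2 hkk
  have h1 := Finset.mem_range.mp hk1
  have h2 := Finset.mem_range.mp hk2
  have := congrArg Fin.val hkk
  rw [Fin.val_natCast, Fin.val_natCast, Nat.mod_eq_of_lt (by omega),
    Nat.mod_eq_of_lt (by omega)] at this
  exact this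

lemma count_ineq (b m c n' n A : ℕ) (hm : m = A * 2 ^ b)
    (hc : c = (b + 1) * (m + 1)) (hn' : n' = c + 2 * b) (hn : n = n' + c) :
    A * n.choose b ≤ m * n'.choose b := by
  have key : A * n.descFactorial b ≤ m * n'.descFactorial b := by
    calc A * n.descFactorial b ≤ A * n ^ b :=
          Nat.mul_le_mul_left A (Nat.descFactorial_le_pow n b)
      _ ≤ A * (2 * (c + b + 1)) ^ b := by
          apply Nat.mul_le_mul_left
          apply Nat.pow_le_pow_left
          omega
      _ = m * (c + b + 1) ^ b := by rw [hm, mul_pow]; ring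
      _ = m * (n' + 1 - b) ^ b := by congr 2; omega
      _ ≤ m * n'.descFactorial b :=
          Nat.mul_le_mul_left m (Nat.pow_sub_le_descFactorial n' b)
  have h1 := Nat.descFactorial_eq_factorial_mul_choose n b
  have h2 := Nat.descFactorial_eq_factorial_mul_choose n' b
  rw [h1, h2] at key
  have hb0 : 0 < b.factorial := Nat.factorial_pos b
  calc A * n.choose b = A * n.choose b * b.factorial / b.factorial := by
        rw [Nat.mul_div_cancel _ hb0]
    _ ≤ m * n'.choose b * b.factorial / b.factorial := by
        apply Nat.div_le_div_right
        calc A * n.choose b * b.factorial = A * (b.factorial * n.choose b) := by ring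
          _ ≤ m * (b.factorial * n'.choose b) := key
          _ = m * n'.choose b * b.factorial := by ring
    _ = m * n'.choose b := Nat.mul_div_cancel _ hb0

end Counting

section ShiftFun
open FF FFAux SimpleGraph Finset
open scoped Classical

variable {n : ℕ} [NeZero n]

noncomputable def shiftFun (b m : ℕ) (F' : Finset (Fin n)) (h : F'.card = b) :
    Fin b → Fin n :=
  fun i => (((F'.orderEmbOfFin h i).val + (m + 1) * (i.val + 1) : ℕ) : Fin n)

lemma shiftFun_val {b m n' : ℕ} (hn : n = n' + (b + 1) * (m + 1))
    (F' : Finset (Fin n)) (h : F'.card = b) (hsub : ∀ v ∈ F', v.val < n')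
    (i : Fin b) :
    (shiftFun b m F' h i).val
      = (F'.orderEmbOfFin h i).val + (m + 1) * (i.val + 1) := by
  rw [shiftFun, Fin.val_natCast]
  apply Nat.mod_eq_of_lt
  have h1 : (F'.orderEmbOfFin h i).val < n' := hsub _ (Finset.orderEmbOfFin_mem F' h i)
  have h2 : i.val < b := i.isLt
  have h3 : (m + 1) * (i.val + 1) ≤ (m + 1) * b := Nat.mul_le_mul_left _ (by omega)
  have h4 : (b + 1) * (m + 1) = (m + 1) * b + (m + 1) := by ring
  omega

lemma shiftFun_mono {b m n' : ℕ} (hn : n = n' + (b + 1) * (m + 1))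
    (F' : Finset (Fin n)) (h : F'.card = b) (hsub : ∀ v ∈ F', v.val < n') :
    StrictMono (shiftFun b m F' h) := by
  intro i j hij
  rw [Fin.lt_def, shiftFun_val hn F' h hsub i, shiftFun_val hn F' h hsub j]
  have he : (F'.orderEmbOfFin h i).val < (F'.orderEmbOfFin h j).val := by
    have := (F'.orderEmbOfFin h).strictMono hij
    exact this
  have hij' : i.val < j.val := hij
  have hmul : (m + 1) * (i.val + 1) ≤ (m + 1) * (j.val + 1) :=
    Nat.mul_le_mul_left _ (by omega)
  omega

lemma sum_good (b m n' : ℕ) (hb : 1 ≤ b) (hm : 1 ≤ m)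
    (hn'b : b ≤ n') (hn : n = n' + (b + 1) * (m + 1)) :
    (m : ℚ) * (n'.choose b : ℕ) ≤
      ∑ F ∈ (Finset.univ : Finset (Fin n)).powersetCard b,
        ((n : ℚ) - (PRMVS (pathG n) F b : ℕ)) := by
  have hn'n : n' ≤ n := by omega
  set D := (Finset.univ : Finset (Fin n)).filter (fun v => v.val < n') with hD
  have hDcard : D.card = n' := fin_filter_lt_card n' hn'n
  set Φ : Finset (Fin n) → Finset (Fin n) := fun F' =>
    if h : F'.card = b then Finset.image (shiftFun b m F' h) Finset.univ else ∅
    with hΦ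
  have hsub_of : ∀ F' ∈ D.powersetCard b, (∀ v ∈ F', v.val < n') ∧ F'.card = b := by
    intro F' hF'
    obtain ⟨hs, hc⟩ := Finset.mem_powersetCard.mp hF'
    exact ⟨fun v hv => (Finset.mem_filter.mp (hs hv)).2, hc⟩
  have hΦc : ∀ F' ∈ D.powersetCard b, (Φ F').card = b := by
    intro F' hF'
    obtain ⟨hsub, hc⟩ := hsub_of F' hF'
    rw [hΦ]
    simp only [dif_pos hc]
    rw [Finset.card_image_of_injective _ (shiftFun_mono hn F' hc hsub).injective,
      Finset.card_univ, Fintype.card_fin]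
  -- injectivity
  have hinj : Set.InjOn Φ (D.powersetCard b) := by
    intro F1 h1 F2 h2 heq
    obtain ⟨hsub1, hc1⟩ := hsub_of F1 h1
    obtain ⟨hsub2, hc2⟩ := hsub_of F2 h2
    rw [hΦ] at heq
    simp only [dif_pos hc1, dif_pos hc2] at heq
    have hm1 := shiftFun_mono hn F1 hc1 hsub1
    have hm2 := shiftFun_mono hn F2 hc2 hsub2
    set T := Finset.image (shiftFun b m F1 hc1) Finset.univ with hT
    have hTc : T.card = b := by
      rw [hT, Finset.card_image_of_injective _ hm1.injective,
        Finset.card_univ, Fintype.card_fin]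
    have hu1 : shiftFun b m F1 hc1 = T.orderEmbOfFin hTc :=
      Finset.orderEmbOfFin_unique hTc
        (fun i => Finset.mem_image_of_mem _ (Finset.mem_univ i)) hm1
    have hu2 : shiftFun b m F2 hc2 = T.orderEmbOfFin hTc :=
      Finset.orderEmbOfFin_unique hTc
        (fun i => by
          rw [heq]
          exact Finset.mem_image_of_mem _ (Finset.mem_univ i)) hm2
    have hyy : ∀ i, shiftFun b m F1 hc1 i = shiftFun b m F2 hc2 i := by
      rw [hu1, hu2]
      intro i
      rfl
    have hee : ∀ i, F1.orderEmbOfFin hc1 i = F2.orderEmbOfFin hc2 i := by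
      intro i
      have hv := congrArg Fin.val (hyy i)
      rw [shiftFun_val hn F1 hc1 hsub1 i, shiftFun_val hn F2 hc2 hsub2 i] at hv
      exact Fin.ext (by omega)
    apply Finset.coe_injective
    rw [← Finset.range_orderEmbOfFin F1 hc1, ← Finset.range_orderEmbOfFin F2 hc2]
    have : ⇑(F1.orderEmbOfFin hc1) = ⇑(F2.orderEmbOfFin hc2) := funext hee
    rw [this]
  -- per-set bound
  have hterm : ∀ F' ∈ D.powersetCard b,
      (m : ℚ) ≤ (n : ℚ) - (PRMVS (pathG n) (Φ F') b : ℕ) := by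
    intro F' hF'
    obtain ⟨hsub, hc⟩ := hsub_of F' hF'
    set x : ℕ → Fin n := fun i =>
      if hi : i < b then shiftFun b m F' hc ⟨i, hi⟩ else 0 with hx
    have hxv : ∀ (i : ℕ) (hi : i < b),
        (x i).val = (F'.orderEmbOfFin hc ⟨i, hi⟩).val + (m + 1) * (i + 1) := by
      intro i hi
      rw [hx]
      simp only [dif_pos hi]
      exact shiftFun_val hn F' hc hsub ⟨i, hi⟩
    have hprm : PRMVS (pathG n) (Φ F') b ≤ n - m := by
      apply path_prmvs hb hm x
      · rw [hΦ]
        simp only [dif_pos hc]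
        ext v
        simp only [Finset.mem_image, Finset.mem_univ, true_and, Finset.mem_range]
        constructor
        · rintro ⟨i, rfl⟩
          exact ⟨i.val, i.isLt, by rw [hx]; simp only [dif_pos i.isLt]⟩
        · rintro ⟨i, hi, rfl⟩
          refine ⟨⟨i, hi⟩, ?_⟩
          rw [hx]
          simp only [dif_pos hi]
      · intro i j hij hjb
        have := shiftFun_mono hn F' hc hsub
          (show (⟨i, by omega⟩ : Fin b) < ⟨j, hjb⟩ from Fin.mk_lt_mk.mpr hij)
        rw [Fin.lt_def] at this
        rw [hx]
        simp only [dif_pos (show i < b by omega), dif_pos hjb]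
        exact this
      · rw [hxv 0 (by omega)]
        have : (m + 1) * (0 + 1) = m + 1 := by ring
        omega
      · intro i hi1
        rw [hxv i (by omega), hxv (i + 1) hi1]
        have hmle : (F'.orderEmbOfFin hc ⟨i, by omega⟩).val
            ≤ (F'.orderEmbOfFin hc ⟨i + 1, hi1⟩).val := by
          have := (F'.orderEmbOfFin hc).monotone
            (show (⟨i, by omega⟩ : Fin b) ≤ ⟨i + 1, hi1⟩ from by
              rw [Fin.mk_le_mk]; omega)
          exact this
        have hexp : (m + 1) * (i + 1 + 1) = (m + 1) * (i + 1) + (m + 1) := by ring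
        omega
      · rw [hxv (b - 1) (by omega)]
        have h1 : (F'.orderEmbOfFin hc ⟨b - 1, by omega⟩).val < n' :=
          hsub _ (Finset.orderEmbOfFin_mem F' hc _)
        have h2 : (m + 1) * (b - 1 + 1) = (m + 1) * b := by
          congr 1
          omega
        have h4 : (b + 1) * (m + 1) = (m + 1) * b + (m + 1) := by ring
        omega
    have hmn : m ≤ n := by
      have hprod : (b + 1) * (m + 1) = b * m + b + m + 1 := by ring
      omega
    have hcast : ((n - m : ℕ) : ℚ) = (n : ℚ) - m := by
      rw [Nat.cast_sub hmn]
    have := (Nat.cast_le (α := ℚ)).mpr hprm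
    rw [hcast] at this
    linarith
  -- assemble the sum
  have himg_sub : (D.powersetCard b).image Φ ⊆
      (Finset.univ : Finset (Fin n)).powersetCard b := by
    intro T hT
    obtain ⟨F', hF', rfl⟩ := Finset.mem_image.mp hT
    exact Finset.mem_powersetCard.mpr ⟨Finset.subset_univ _, hΦc F' hF'⟩
  have hcard_img : ((D.powersetCard b).image Φ).card = n'.choose b := by
    rw [Finset.card_image_of_injOn hinj, Finset.card_powersetCard, hDcard]
  have hnonneg : ∀ F ∈ (Finset.univ : Finset (Fin n)).powersetCard b,
      (0 : ℚ) ≤ (n : ℚ) - (PRMVS (pathG n) F b : ℕ) := by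
    intro F _
    have := prmvs_le_card (pathG n) F b
    rw [Fintype.card_fin] at this
    have := (Nat.cast_le (α := ℚ)).mpr this
    linarith
  calc (m : ℚ) * (n'.choose b : ℕ)
      = ∑ _F ∈ (D.powersetCard b).image Φ, (m : ℚ) := by
        rw [Finset.sum_const, hcard_img, nsmul_eq_mul]
        ring
    _ ≤ ∑ F ∈ (D.powersetCard b).image Φ,
          ((n : ℚ) - (PRMVS (pathG n) F b : ℕ)) := by
        apply Finset.sum_le_sum
        intro F hF
        obtain ⟨F', hF', rfl⟩ := Finset.mem_image.mp hF
        exact hterm F' hF'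
    _ ≤ ∑ F ∈ (Finset.univ : Finset (Fin n)).powersetCard b,
          ((n : ℚ) - (PRMVS (pathG n) F b : ℕ)) := by
        apply Finset.sum_le_sum_of_subset_of_nonneg himg_sub
        intro F hF _
        exact hnonneg F hF

end ShiftFun

section Final
open FF FFAux SimpleGraph Finset
open scoped Classical

lemma epr_def {n : ℕ} (G : SimpleGraph (Fin n)) (q b : ℕ) :
    Epr G q b = (∑ F ∈ (Finset.univ : Finset (Fin n)).powersetCard q,
      ((n : ℚ) - (PRMVS G F b : ℕ))) / ((n.choose q : ℕ) : ℚ) := by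
  unfold FF.Epr
  rw [Fintype.card_fin]

lemma epr_nonneg {n : ℕ} (G : SimpleGraph (Fin n)) (q b : ℕ) :
    0 ≤ Epr G q b := by
  rw [epr_def]
  apply div_nonneg
  · apply Finset.sum_nonneg
    intro F _
    have h := prmvs_le_card G F b
    rw [Fintype.card_fin] at h
    have := (Nat.cast_le (α := ℚ)).mpr h
    linarith
  · positivity

lemma epr_cyc_le {n b : ℕ} [NeZero n] (hn3 : 3 ≤ n) (hb : 1 ≤ b)
    (hbn : 2 * b < n) : Epr (cycG n) b b ≤ ((2 * b : ℕ) : ℚ) := by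
  have hC : (0 : ℚ) < ((n.choose b : ℕ) : ℚ) := by
    exact_mod_cast Nat.choose_pos (show b ≤ n by omega)
  rw [epr_def, div_le_iff₀ hC]
  have hbound : ∀ F ∈ (Finset.univ : Finset (Fin n)).powersetCard b,
      (n : ℚ) - (PRMVS (cycG n) F b : ℕ) ≤ ((2 * b : ℕ) : ℚ) := by
    intro F hF
    obtain ⟨-, hcard⟩ := Finset.mem_powersetCard.mp hF
    have h1 : n - 2 * b ≤ PRMVS (cycG n) F b :=
      cycle_prmvs hn3 hb F hcard (by omega)
    have h2 := (Nat.cast_le (α := ℚ)).mpr h1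
    rw [Nat.cast_sub (by omega : 2 * b ≤ n)] at h2
    push_cast at h2 ⊢
    linarith
  calc ∑ F ∈ (Finset.univ : Finset (Fin n)).powersetCard b,
        ((n : ℚ) - (PRMVS (cycG n) F b : ℕ))
      ≤ ∑ _F ∈ (Finset.univ : Finset (Fin n)).powersetCard b, ((2 * b : ℕ) : ℚ) :=
        Finset.sum_le_sum hbound
    _ = ((2 * b : ℕ) : ℚ) * ((n.choose b : ℕ) : ℚ) := by
        rw [Finset.sum_const, Finset.card_powersetCard, Finset.card_univ,
          Fintype.card_fin, nsmul_eq_mul]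
        ring

lemma epr_path_ge {n b m n' A : ℕ} [NeZero n] (hb : 1 ≤ b) (hm : 1 ≤ m)
    (hn'b : b ≤ n') (hn : n = n' + (b + 1) * (m + 1))
    (hcount : A * n.choose b ≤ m * n'.choose b) :
    (A : ℚ) ≤ Epr (pathG n) b b := by
  have hbn : b ≤ n := by
    have : b + 1 ≤ (b + 1) * (m + 1) := Nat.le_mul_of_pos_right _ (by omega)
    omega
  have hC : (0 : ℚ) < ((n.choose b : ℕ) : ℚ) := by
    exact_mod_cast Nat.choose_pos hbn
  rw [epr_def, le_div_iff₀ hC]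
  have h1 : ((A * n.choose b : ℕ) : ℚ) ≤ ((m * n'.choose b : ℕ) : ℚ) :=
    (Nat.cast_le (α := ℚ)).mpr hcount
  push_cast at h1
  have h2 := sum_good (n := n) b m n' hb hm hn'b hn
  calc (A : ℚ) * ((n.choose b : ℕ) : ℚ) ≤ (m : ℚ) * ((n'.choose b : ℕ) : ℚ) := by
        push_cast
        linarith
    _ ≤ _ := h2

end Final

open FF

theorem stmt13' (b : ℕ) (hb : 1 ≤ b) (K : ℚ) :
    ∃ (n : ℕ) (G H : SimpleGraph (Fin n)),
      H ≤ G ∧ G.Connected ∧ H.Connected ∧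
      FF.Epr G b b < FF.Epr H b b ∧ K * FF.Epr G b b < FF.Epr H b b := by
  classical
  set A : ℕ := ⌈(|K| + 1) * (2 * b : ℚ) + 1⌉₊ with hA
  have hApos : 0 < A := by
    rw [hA]
    apply Nat.ceil_pos.mpr
    positivity
  have hAge : ((|K| + 1) * (2 * b : ℚ) + 1) ≤ (A : ℚ) := Nat.le_ceil _
  set m : ℕ := A * 2 ^ b with hm
  have hm1 : 1 ≤ m := by
    calc 1 = 1 * 1 := by ring
      _ ≤ A * 2 ^ b := Nat.mul_le_mul hApos (Nat.one_le_two_pow)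
  set c : ℕ := (b + 1) * (m + 1) with hc
  set n' : ℕ := c + 2 * b with hn'
  set n : ℕ := n' + c with hn
  have hcb : b + 1 ≤ c := Nat.le_mul_of_pos_right _ (by omega)
  have hn3 : 3 ≤ n := by omega
  haveI : NeZero n := ⟨by omega⟩
  have hle : pathG n ≤ cycG n := path_le_cyc (by omega)
  have hconnH : (pathG n).Connected := pathG_connected (by omega)
  refine ⟨n, cycG n, pathG n, hle, hconnH.mono hle, hconnH, ?_⟩
  have hEG_le : Epr (cycG n) b b ≤ ((2 * b : ℕ) : ℚ) :=
    epr_cyc_le hn3 hb (by omega)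
  have hEG_0 : 0 ≤ Epr (cycG n) b b := epr_nonneg _ _ _
  have hcount : A * n.choose b ≤ m * n'.choose b :=
    count_ineq b m c n' n A hm hc hn' hn
  have hEH : (A : ℚ) ≤ Epr (pathG n) b b :=
    epr_path_ge hb hm1 (by omega) (by rw [hn, hn', hc]) hcount
  have habs : (0 : ℚ) ≤ |K| := abs_nonneg K
  have hbq : (0 : ℚ) ≤ ((2 * b : ℕ) : ℚ) := by positivity
  have hAgt : ((2 * b : ℕ) : ℚ) < (A : ℚ) := by
    push_cast
    push_cast at hAge
    nlinarith
  constructor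
  · linarith
  · have h1 : K * Epr (cycG n) b b ≤ |K| * Epr (cycG n) b b :=
      mul_le_mul_of_nonneg_right (le_abs_self K) hEG_0
    have h2 : |K| * Epr (cycG n) b b ≤ |K| * ((2 * b : ℕ) : ℚ) :=
      mul_le_mul_of_nonneg_left hEG_le habs
    have h3 : |K| * ((2 * b : ℕ) : ℚ) < (A : ℚ) := by
      push_cast
      push_cast at hAge
      nlinarith
    linarith

theorem stmt13 (b : ℕ) (hb : 1 ≤ b) (K : ℚ) :
    ∃ (n : ℕ) (G H : SimpleGraph (Fin n)),
      H ≤ G ∧ G.Connected ∧ H.Connected ∧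
      FF.Epr G b b < FF.Epr H b b ∧ K * FF.Epr G b b < FF.Epr H b b :=
  stmt13' b hb K
end

section
/- Let $G$ be a graph, $F$ a fire set, and suppose each vertex $v$ carries a positive integer weight $w_v$. Construct $G''$ from $G$ by attaching $w_v - 1$ new leaves $L_v$ to each vertex $v$, and let $F'' = \bigcup_{v \in F}(L_v \cup \{v\})$. Then in the path-restricted firefighter game, $b$ firefighters can save total weight at least $k$ in $(G, F)$ if and only if they can save at least $k$ vertices in $(G'', F'')$. -/
open SimpleGraph Finset
open scoped Classical

open FF

/-- One-directional edge description of `G''`: the graph `G` together with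
`w v - 1` new pendant leaves `L_v` attached to each vertex `v`. -/
def wLink {V : Type*} (G : SimpleGraph V) (w : V → ℕ) :
    (V ⊕ Σ v : V, Fin (w v - 1)) → (V ⊕ Σ v : V, Fin (w v - 1)) → Prop
  | Sum.inl a, Sum.inl b => G.Adj a b
  | Sum.inl a, Sum.inr x => a = x.1
  | _, _ => False

/-- The graph `G''` obtained from `G` by attaching `w v - 1` leaves to each vertex `v`. -/
def wGraph {V : Type*} (G : SimpleGraph V) (w : V → ℕ) :
    SimpleGraph (V ⊕ Σ v : V, Fin (w v - 1)) where
  Adj x y := wLink G w x y ∨ wLink G w y x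
  symm := ⟨fun x y h => h.symm⟩
  loopless := ⟨by
    rintro (a | x) h
    · exact G.irrefl (by rcases h with h | h <;> exact h)
    · rcases h with h | h <;> exact h⟩

/-- The fire set `F'' = ⋃_{v ∈ F} (L_v ∪ {v})`. -/
noncomputable def wFire {V : Type*} [Fintype V] [DecidableEq V]
    (F : Finset V) (w : V → ℕ) : Finset (V ⊕ Σ v : V, Fin (w v - 1)) :=
  Finset.univ.filter (fun x =>
    match x with
    | Sum.inl a => a ∈ F
    | Sum.inr y => y.1 ∈ F)

section Generic
open FF
variable {V : Type*} [Fintype V] [DecidableEq V]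

lemma mem_spread {G : SimpleGraph V} {D B : Finset V} {v : V} :
    v ∈ FF.spread G D B ↔ v ∈ B ∨ (v ∉ D ∧ ∃ u ∈ B, G.Adj u v) := by
  simp [FF.spread]

lemma spread_subset (G : SimpleGraph V) (D B : Finset V) : B ⊆ FF.spread G D B :=
  Finset.subset_union_left

lemma spread_mono {G : SimpleGraph V} {D D' B B' : Finset V} (hD : D ⊆ D') (hB : B ⊆ B') :
    FF.spread G D' B ⊆ FF.spread G D B' := by
  intro v hv
  rw [mem_spread] at hv ⊢
  rcases hv with hv | ⟨hvD, u, hu, hadj⟩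
  · exact Or.inl (hB hv)
  · exact Or.inr ⟨fun h => hvD (hD h), u, hB hu, hadj⟩

lemma pburnt_succ (G : SimpleGraph V) (F : Finset V) {b : ℕ} (p : ℕ → Fin b → V) (t : ℕ) :
    FF.pburnt G F p (t + 1) = FF.spread G (FF.posDef p t) (FF.pburnt G F p t) := rfl

lemma mem_posDef {b : ℕ} {p : ℕ → Fin b → V} {t : ℕ} {v : V} :
    v ∈ FF.posDef p t ↔ ∃ τ ≤ t, ∃ i, p τ i = v := by
  simp [FF.posDef, Nat.lt_succ_iff]

lemma posDef_mono {b : ℕ} {p : ℕ → Fin b → V} {s t : ℕ} (h : s ≤ t) :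
    FF.posDef p s ⊆ FF.posDef p t := by
  intro v hv
  rw [mem_posDef] at hv ⊢
  obtain ⟨τ, hτ, i, hi⟩ := hv
  exact ⟨τ, hτ.trans h, i, hi⟩

lemma pburnt_mono (G : SimpleGraph V) (F : Finset V) {b : ℕ} (p : ℕ → Fin b → V)
    {s t : ℕ} (h : s ≤ t) : FF.pburnt G F p s ⊆ FF.pburnt G F p t := by
  induction t with
  | zero => simpa [Nat.le_zero.mp h] using Finset.Subset.refl _
  | succ t ih =>
    rcases Nat.lt_succ_iff_lt_or_eq.mp (Nat.lt_succ_of_le h) with h' | rfl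
    · exact (ih (Nat.lt_succ_iff.mp h')).trans
        (by rw [pburnt_succ]; exact spread_subset _ _ _)
    · exact Finset.Subset.refl _

lemma pburnt_step_stab (G : SimpleGraph V) (F : Finset V) {b : ℕ} (p : ℕ → Fin b → V)
    {t : ℕ} (h : FF.pburnt G F p (t + 1) = FF.pburnt G F p t) :
    FF.pburnt G F p (t + 2) = FF.pburnt G F p (t + 1) := by
  apply Finset.Subset.antisymm
  · rw [pburnt_succ, h]
    calc FF.spread G (FF.posDef p (t+1)) (FF.pburnt G F p t)
        ⊆ FF.spread G (FF.posDef p t) (FF.pburnt G F p t) :=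
          spread_mono (posDef_mono (Nat.le_succ t)) (Finset.Subset.refl _)
      _ = FF.pburnt G F p (t + 1) := (pburnt_succ G F p t).symm
      _ = FF.pburnt G F p t := h
  · exact pburnt_mono G F p (Nat.le_succ _)

lemma pburnt_stab (G : SimpleGraph V) (F : Finset V) {b : ℕ} (p : ℕ → Fin b → V)
    {t : ℕ} (ht : Fintype.card V ≤ t) :
    FF.pburnt G F p t = FF.pburnt G F p (Fintype.card V) := by
  set N := Fintype.card V with hN
  -- there is a stall time s ≤ N
  have key : ∃ s ≤ N, FF.pburnt G F p (s + 1) = FF.pburnt G F p s := by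
    by_contra hcon
    push_neg at hcon
    have grow : ∀ n ≤ N + 1, n ≤ (FF.pburnt G F p n).card := by
      intro n hn
      induction n with
      | zero => exact Nat.zero_le _
      | succ m ih =>
        have hm : m ≤ N := Nat.lt_succ_iff.mp hn
        have hssub : FF.pburnt G F p m ⊂ FF.pburnt G F p (m + 1) :=
          Finset.ssubset_iff_subset_ne.mpr
            ⟨pburnt_mono G F p (Nat.le_succ m), fun hEq => hcon m hm hEq.symm⟩
        have := Finset.card_lt_card hssub
        omega
    have h1 := grow (N + 1) le_rfl
    have h2 : (FF.pburnt G F p (N + 1)).card ≤ N := by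
      rw [hN]; exact Finset.card_le_univ _
    omega
  obtain ⟨s, hsN, hs⟩ := key
  have step : ∀ j, FF.pburnt G F p (s + j + 1) = FF.pburnt G F p (s + j) := by
    intro j
    induction j with
    | zero => rw [Nat.add_zero]; exact hs
    | succ l ihl =>
      have h2 := pburnt_step_stab G F p ihl
      have e1 : s + (l+1) + 1 = s + l + 2 := by ring
      have e2 : s + (l+1) = s + l + 1 := by ring
      rw [e1, e2]; exact h2
  have const : ∀ j, FF.pburnt G F p (s + j) = FF.pburnt G F p s := by
    intro j
    induction j with
    | zero => rfl
    | succ l ihl => rw [show s + (l+1) = s + l + 1 by ring, step l, ihl]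
  have h1 : FF.pburnt G F p t = FF.pburnt G F p s := by
    have : t = s + (t - s) := by omega
    rw [this, const]
  have h2 : FF.pburnt G F p N = FF.pburnt G F p s := by
    have : N = s + (N - s) := by omega
    rw [this, const]
  rw [h1, h2]
end Generic
section WSpecific
open FF
variable {V : Type*} [Fintype V] [DecidableEq V]
variable {G : SimpleGraph V} {w : V → ℕ}

/-- Projection of `G''`-vertices to `G`-vertices. -/
def wproj (w : V → ℕ) : (V ⊕ Σ v : V, Fin (w v - 1)) → V := Sum.elim id Sigma.fst

lemma wGraph_adj_inl_inl {a c : V} (h : (wGraph G w).Adj (Sum.inl a) (Sum.inl c)) :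
    G.Adj a c := by
  rcases h with h | h
  · exact h
  · exact (h : G.Adj c a).symm

lemma wGraph_adj_inl_inl' {a c : V} (h : G.Adj a c) :
    (wGraph G w).Adj (Sum.inl a) (Sum.inl c) := Or.inl h

lemma wGraph_adj_inr {x : Σ v : V, Fin (w v - 1)} {y : V ⊕ Σ v : V, Fin (w v - 1)}
    (h : (wGraph G w).Adj y (Sum.inr x)) : y = Sum.inl x.1 := by
  rcases y with a | x'
  · rcases h with h | h
    · exact congrArg Sum.inl (h : a = x.1)
    · exact (h : False).elim
  · rcases h with h | h
    · exact (h : False).elim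
    · exact (h : False).elim

lemma wGraph_adj_leaf (x : Σ v : V, Fin (w v - 1)) :
    (wGraph G w).Adj (Sum.inl x.1) (Sum.inr x) := Or.inl rfl

lemma wGraph_adj_proj {y z : V ⊕ Σ v : V, Fin (w v - 1)} (h : (wGraph G w).Adj y z) :
    wproj w y = wproj w z ∨ G.Adj (wproj w y) (wproj w z) := by
  rcases y with a | x <;> rcases z with c | x'
  · exact Or.inr (wGraph_adj_inl_inl h)
  · rcases h with h | h
    · exact Or.inl (h : a = x'.1)
    · exact (h : False).elim
  · rcases h with h | h
    · exact (h : False).elim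
    · exact Or.inl ((h : c = x.1)).symm
  · rcases h with h | h
    · exact (h : False).elim
    · exact (h : False).elim

lemma mem_wFire {F : Finset V} {y : V ⊕ Σ v : V, Fin (w v - 1)} :
    y ∈ wFire F w ↔ wproj w y ∈ F := by
  rcases y with a | x <;> simp [wFire, wproj]

end WSpecific
section Walks
open FF SimpleGraph
variable {V : Type*} [Fintype V] [DecidableEq V]
variable {G : SimpleGraph V} {w : V → ℕ}

lemma walk_len0 {α : Type*} {H : SimpleGraph α} {u v : α} (wk : H.Walk u v)
    (h : wk.length = 0) : v = u ∧ ∀ a ∈ wk.support, a = u := by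
  cases wk with
  | nil => simp
  | cons h' w' => simp at h

lemma walk_support_adj {α : Type*} {H : SimpleGraph α} :
    ∀ {y z : α} (wk : H.Walk y z), 0 < wk.length →
      ∀ v ∈ wk.support, ∃ u ∈ wk.support, H.Adj v u := by
  intro y z wk
  induction wk with
  | nil => simp
  | @cons y y₂ z h w' ih =>
    intro _ v hv
    rw [SimpleGraph.Walk.support_cons, List.mem_cons] at hv
    rcases hv with rfl | hv
    · exact ⟨y₂, by rw [SimpleGraph.Walk.support_cons]; exact
        List.mem_cons_of_mem _ w'.start_mem_support, h⟩
    · rcases Nat.eq_zero_or_pos w'.length with h0 | hpos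
      · have := (walk_len0 w' h0).2 v hv
        subst this
        exact ⟨y, by rw [SimpleGraph.Walk.support_cons]; exact List.mem_cons_self, h.symm⟩
      · obtain ⟨u, hu, hadj⟩ := ih hpos v hv
        exact ⟨u, by rw [SimpleGraph.Walk.support_cons]; exact List.mem_cons_of_mem _ hu, hadj⟩

/-- Projecting a walk in `G''` down to a walk in `G`. -/
lemma exists_projWalk :
    ∀ {y z : V ⊕ Σ v : V, Fin (w v - 1)} (wk : (wGraph G w).Walk y z),
      ∃ q : G.Walk (wproj w y) (wproj w z), q.length ≤ wk.length ∧
        ∀ v ∈ q.support, ∃ u ∈ wk.support, wproj w u = v := by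
  intro y z wk
  induction wk with
  | @nil u =>
    refine ⟨SimpleGraph.Walk.nil, le_rfl, ?_⟩
    intro v hv
    have hvu : v = wproj w u := by simpa using hv
    exact ⟨u, by simp, hvu.symm⟩
  | @cons y y₂ z h w' ih =>
    obtain ⟨q, hql, hqs⟩ := ih
    rcases wGraph_adj_proj h with heq | hadj
    · refine ⟨q.copy heq.symm rfl, by simpa using hql.trans (Nat.le_succ _), ?_⟩
      intro v hv
      rw [SimpleGraph.Walk.support_copy] at hv
      obtain ⟨u, hu, hu'⟩ := hqs v hv
      exact ⟨u, by rw [SimpleGraph.Walk.support_cons]; exact List.mem_cons_of_mem _ hu, hu'⟩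
    · refine ⟨SimpleGraph.Walk.cons hadj q, by simpa using hql, ?_⟩
      intro v hv
      rw [SimpleGraph.Walk.support_cons, List.mem_cons] at hv
      rcases hv with rfl | hv
      · exact ⟨y, by rw [SimpleGraph.Walk.support_cons]; exact List.mem_cons_self, rfl⟩
      · obtain ⟨u, hu, hu'⟩ := hqs v hv
        exact ⟨u, by rw [SimpleGraph.Walk.support_cons]; exact List.mem_cons_of_mem _ hu, hu'⟩

end Walks
section Counting
open FF
variable {V : Type*} [Fintype V] [DecidableEq V]

/-- The subset of `G''`-vertices lying over a subset `S` of `G`-vertices. -/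
noncomputable def Tset (w : V → ℕ) (S : Finset V) : Finset (V ⊕ Σ v : V, Fin (w v - 1)) :=
  Finset.univ.filter (fun y => wproj w y ∈ S)

lemma mem_Tset {w : V → ℕ} {S : Finset V} {y : V ⊕ Σ v : V, Fin (w v - 1)} :
    y ∈ Tset w S ↔ wproj w y ∈ S := by simp [Tset]

lemma Tset_mono {w : V → ℕ} {S S' : Finset V} (h : S ⊆ S') : Tset w S ⊆ Tset w S' :=
  fun y hy => mem_Tset.mpr (h (mem_Tset.mp hy))

lemma card_compl_Tset {w : V → ℕ} (hw : ∀ v, 1 ≤ w v) (S : Finset V) :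
    ((Finset.univ : Finset (V ⊕ Σ v : V, Fin (w v - 1))) \ Tset w S).card
      = ∑ v ∈ Finset.univ \ S, w v := by
  have h1 : (Finset.univ : Finset (V ⊕ Σ v : V, Fin (w v - 1))) \ Tset w S
      = Finset.univ.filter (fun y => wproj w y ∉ S) := by
    ext y; simp [Tset]
  have h2 : (Finset.univ.filter (fun y : V ⊕ Σ v : V, Fin (w v - 1) => wproj w y ∉ S))
      = ((Finset.univ.filter (fun a : V => a ∉ S)).map ⟨Sum.inl, Sum.inl_injective⟩)
        ∪ ((Finset.univ.filter (fun x : Σ v : V, Fin (w v - 1) => x.1 ∉ S)).map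
            ⟨Sum.inr, Sum.inr_injective⟩) := by
    ext y
    rcases y with a | x <;> rw [Finset.mem_filter] <;> simp [wproj]
  have hdisj : Disjoint
      ((Finset.univ.filter (fun a : V => a ∉ S)).map ⟨Sum.inl, Sum.inl_injective⟩)
      ((Finset.univ.filter (fun x : Σ v : V, Fin (w v - 1) => x.1 ∉ S)).map
          ⟨Sum.inr, Sum.inr_injective⟩) := by
    rw [Finset.disjoint_left]
    rintro y hy hy'
    simp only [Finset.mem_map, Function.Embedding.coeFn_mk] at hy hy'
    obtain ⟨a, _, rfl⟩ := hy
    obtain ⟨x, _, hx⟩ := hy'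
    cases hx
  have hA : (Finset.univ.filter (fun a : V => a ∉ S)) = Finset.univ \ S := by
    ext a; simp
  have hB : (Finset.univ.filter (fun x : Σ v : V, Fin (w v - 1) => x.1 ∉ S))
      = (Finset.univ \ S).sigma (fun _ => Finset.univ) := by
    ext ⟨v, j⟩; simp
  rw [h1, h2, Finset.card_union_of_disjoint hdisj, Finset.card_map, Finset.card_map,
    hA, hB, Finset.card_sigma]
  simp only [Finset.card_univ, Fintype.card_fin]
  rw [Finset.card_eq_sum_ones, ← Finset.sum_add_distrib]
  exact Finset.sum_congr rfl (fun v _ => by have := hw v; omega)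

end Counting
section Claims
open FF
variable {V : Type*} [Fintype V] [DecidableEq V]
variable {G : SimpleGraph V} {w : V → ℕ} {F : Finset V} {b : ℕ}

/-- Burnt vertices of the projected strategy are burnt (as `inl`-vertices) in `G''`. -/
lemma claimA (q : ℕ → Fin b → (V ⊕ Σ v : V, Fin (w v - 1))) :
    ∀ t, ∀ v ∈ FF.pburnt G F (fun t i => wproj w (q t i)) t,
      Sum.inl v ∈ FF.pburnt (wGraph G w) (wFire F w) q t := by
  intro t
  induction t with
  | zero =>
    intro v hv
    have hv' : v ∈ F := hv
    exact mem_wFire.mpr hv'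
  | succ t ih =>
    intro v hv
    rw [pburnt_succ, mem_spread] at hv ⊢
    rcases hv with hv | ⟨hvD, u, hu, hadj⟩
    · exact Or.inl (ih v hv)
    · refine Or.inr ⟨?_, Sum.inl u, ih u hu, wGraph_adj_inl_inl' hadj⟩
      intro hmem
      rw [mem_posDef] at hmem
      obtain ⟨τ, hτ, i, hi⟩ := hmem
      exact hvD (mem_posDef.mpr ⟨τ, hτ, i, by rw [hi]; rfl⟩)

/-- The projected strategy never stands on a burnt vertex. -/
lemma claimB (d : ℕ) (q : ℕ → Fin b → (V ⊕ Σ v : V, Fin (w v - 1)))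
    (hq : FF.ValidDPR (wGraph G w) (wFire F w) d q) :
    ∀ t i, wproj w (q t i) ∉ FF.pburnt G F (fun t i => wproj w (q t i)) t := by
  intro t
  induction t with
  | zero =>
    intro i hmem
    have hF : wproj w (q 0 i) ∈ F := hmem
    exact hq.1 0 i (mem_wFire.mpr hF)
  | succ t ih =>
    intro i hmem
    have h2 := claimA q (t + 1) _ hmem
    rcases hq1 : q (t + 1) i with a | x
    · rw [hq1] at h2
      have := hq.1 (t + 1) i
      rw [hq1] at this
      exact this h2
    · -- leaf case
      have hp1 : wproj w (q (t + 1) i) = x.1 := by rw [hq1]; rfl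
      rw [hp1] at hmem
      obtain ⟨w0, hlen, hsup⟩ := hq.2 t i
      rcases Classical.em (Sum.inl x.1 ∈ w0.support) with hc | hc
      · have := hsup _ hc
        rw [hp1] at h2
        exact this h2
      · have hend : Sum.inr x ∈ w0.support := hq1 ▸ w0.end_mem_support
        rcases Nat.eq_zero_or_pos w0.length with h0 | hpos
        · have h01 := walk_len0 w0 h0
          have hq0 : q t i = Sum.inr x := by rw [← h01.1, hq1]
          have hpt : wproj w (q t i) = x.1 := by rw [hq0]; rfl
          have hnB : x.1 ∉ FF.pburnt G F (fun t i => wproj w (q t i)) t := hpt ▸ ih i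
          have hD : x.1 ∈ FF.posDef (fun t i => wproj w (q t i)) t :=
            mem_posDef.mpr ⟨t, le_rfl, i, hpt⟩
          rw [pburnt_succ, mem_spread] at hmem
          rcases hmem with hmem | ⟨hD', _⟩
          · exact hnB hmem
          · exact hD' hD
        · obtain ⟨u, hu, hadj⟩ := walk_support_adj w0 hpos _ hend
          have hu' := wGraph_adj_inr hadj.symm
          exact hc (hu' ▸ hu)

/-- If a firefighter ever stands on a leaf over `x.1`, then `x.1` never burns
in the projected game. -/
lemma leaf_never (d : ℕ) (q : ℕ → Fin b → (V ⊕ Σ v : V, Fin (w v - 1)))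
    (hq : FF.ValidDPR (wGraph G w) (wFire F w) d q)
    {x : Σ v : V, Fin (w v - 1)} {τ : ℕ} {i : Fin b} (hqi : q τ i = Sum.inr x) :
    ∀ t, x.1 ∉ FF.pburnt G F (fun t i => wproj w (q t i)) t := by
  have hpτ : wproj w (q τ i) = x.1 := by rw [hqi]; rfl
  have hτ : x.1 ∉ FF.pburnt G F (fun t i => wproj w (q t i)) τ :=
    hpτ ▸ claimB d q hq τ i
  have hadd : ∀ s, x.1 ∉ FF.pburnt G F (fun t i => wproj w (q t i)) (τ + s) := by
    intro s
    induction s with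
    | zero => exact hτ
    | succ l ihl =>
      rw [show τ + (l + 1) = (τ + l) + 1 by ring, pburnt_succ, mem_spread]
      rintro (h | ⟨hD, _⟩)
      · exact ihl h
      · exact hD (mem_posDef.mpr ⟨τ, Nat.le_add_right _ _, i, hpτ⟩)
  intro t
  rcases le_or_gt τ t with h | h
  · have : t = τ + (t - τ) := by omega
    rw [this]; exact hadd _
  · exact fun hmem => hτ (pburnt_mono G F _ h.le hmem)

/-- Burnt set of `G''` under the lifted strategy is contained in the `Tset`
over the burnt set of `G`. -/
lemma forward_incl (p : ℕ → Fin b → V) :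
    ∀ t, FF.pburnt (wGraph G w) (wFire F w) (fun t i => Sum.inl (p t i)) t
      ⊆ Tset w (FF.pburnt G F p t) := by
  intro t
  induction t with
  | zero =>
    intro y hy
    have : y ∈ wFire F w := hy
    exact mem_Tset.mpr (mem_wFire.mp this)
  | succ t ih =>
    intro y hy
    rw [pburnt_succ, mem_spread] at hy
    have hmono : Tset w (FF.pburnt G F p t) ⊆ Tset w (FF.pburnt G F p (t + 1)) :=
      Tset_mono (pburnt_mono G F p (Nat.le_succ t))
    rcases hy with hy | ⟨hyD, z, hz, hadj⟩
    · exact hmono (ih hy)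
    · have hzT := mem_Tset.mp (ih hz)
      rcases y with a | x
      · rcases z with u | x'
        · -- inl-inl edge: real spread in G
          have hGadj : G.Adj u a := wGraph_adj_inl_inl hadj
          have haD : a ∉ FF.posDef p t := by
            intro hmem
            rw [mem_posDef] at hmem
            obtain ⟨τ, hτ, i, hi⟩ := hmem
            exact hyD (mem_posDef.mpr ⟨τ, hτ, i, by rw [hi]⟩)
          refine mem_Tset.mpr ?_
          rw [pburnt_succ, mem_spread]
          exact Or.inr ⟨haD, u, hzT, hGadj⟩
        · -- burnt leaf ignites its base, which is already burnt
          have : a = x'.1 := by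
            have := wGraph_adj_inr hadj.symm
            exact Sum.inl_injective this
          subst this
          exact hmono (mem_Tset.mpr hzT)
      · -- leaf burns: its base was burnt at time t
        have hz' := wGraph_adj_inr hadj
        subst hz'
        exact hmono (mem_Tset.mpr hzT)

end Claims
theorem stmt18 {V : Type*} [Fintype V] [DecidableEq V]
    (G : SimpleGraph V) (F : Finset V) (w : V → ℕ) (hw : ∀ v, 1 ≤ w v)
    (b d k : ℕ) :
    (∃ p : ℕ → Fin b → V, FF.ValidDPR G F d p ∧
        k ≤ ∑ v ∈ Finset.univ \ FF.pburnt G F p (Fintype.card V), w v) ↔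
    (∃ q : ℕ → Fin b → (V ⊕ Σ v : V, Fin (w v - 1)),
        FF.ValidDPR (wGraph G w) (wFire F w) d q ∧
        k ≤ (Finset.univ \ FF.pburnt (wGraph G w) (wFire F w) q
              (Fintype.card (V ⊕ Σ v : V, Fin (w v - 1)))).card) := by
  have hNN : Fintype.card V ≤ Fintype.card (V ⊕ Σ v : V, Fin (w v - 1)) :=
    Fintype.card_le_of_injective Sum.inl Sum.inl_injective
  constructor
  · rintro ⟨p, hp, hk⟩
    refine ⟨fun t i => Sum.inl (p t i), ⟨?_, ?_⟩, ?_⟩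
    · intro t i hmem
      exact hp.1 t i (mem_Tset.mp (forward_incl p t hmem))
    · intro t i
      obtain ⟨w0, hlen, hsup⟩ := hp.2 t i
      refine ⟨w0.map ⟨Sum.inl, fun h => Or.inl h⟩, by simpa using hlen, ?_⟩
      intro v hv
      rw [SimpleGraph.Walk.support_map, List.mem_map] at hv
      obtain ⟨a, ha, rfl⟩ := hv
      intro hmem
      exact hsup a ha (mem_Tset.mp (forward_incl p (t + 1) hmem))
    · have hsub : FF.pburnt (wGraph G w) (wFire F w) (fun t i => Sum.inl (p t i))
          (Fintype.card (V ⊕ Σ v : V, Fin (w v - 1)))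
          ⊆ Tset w (FF.pburnt G F p (Fintype.card V)) := by
        have h1 := forward_incl (G := G) (F := F) (w := w) p
          (Fintype.card (V ⊕ Σ v : V, Fin (w v - 1)))
        rwa [pburnt_stab G F p hNN] at h1
      calc k ≤ ∑ v ∈ Finset.univ \ FF.pburnt G F p (Fintype.card V), w v := hk
        _ = ((Finset.univ : Finset (V ⊕ Σ v : V, Fin (w v - 1)))
              \ Tset w (FF.pburnt G F p (Fintype.card V))).card :=
            (card_compl_Tset hw _).symm
        _ ≤ _ := Finset.card_le_card (Finset.sdiff_subset_sdiff (le_refl _) hsub)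
  · rintro ⟨q, hq, hk⟩
    refine ⟨fun t i => wproj w (q t i), ⟨claimB d q hq, ?_⟩, ?_⟩
    · intro t i
      obtain ⟨w0, hlen, hsup⟩ := hq.2 t i
      obtain ⟨qw, hql, hqs⟩ := exists_projWalk w0
      refine ⟨qw, hql.trans hlen, ?_⟩
      intro v hv
      obtain ⟨u, hu, huv⟩ := hqs v hv
      subst huv
      rcases u with a | x
      · intro hmem
        exact hsup _ hu (claimA q (t + 1) a hmem)
      · rcases Classical.em (Sum.inl x.1 ∈ w0.support) with hc | hc
        · intro hmem
          exact hsup _ hc (claimA q (t + 1) x.1 hmem)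
        · rcases Nat.eq_zero_or_pos w0.length with h0 | hpos
          · have h01 := walk_len0 w0 h0
            have hqt : q t i = Sum.inr x := (h01.2 _ hu).symm
            exact leaf_never d q hq hqt (t + 1)
          · obtain ⟨u', hu', hadj⟩ := walk_support_adj w0 hpos _ hu
            have he := wGraph_adj_inr hadj.symm
            exact ((hc (he ▸ hu')).elim)
    · have hT : Tset w (FF.pburnt G F (fun t i => wproj w (q t i)) (Fintype.card V))
          ⊆ FF.pburnt (wGraph G w) (wFire F w) q
              (Fintype.card (V ⊕ Σ v : V, Fin (w v - 1))) := by
        intro y hy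
        have hy' := mem_Tset.mp hy
        rcases y with a | x
        · exact pburnt_mono _ _ q hNN (claimA q (Fintype.card V) a hy')
        · rcases Classical.em (Sum.inr x ∈ FF.pburnt (wGraph G w) (wFire F w) q
              (Fintype.card (V ⊕ Σ v : V, Fin (w v - 1)))) with hx | hnx
          · exact hx
          · exfalso
            have hstab := pburnt_stab (wGraph G w) (wFire F w) q
              (Nat.le_succ (Fintype.card (V ⊕ Σ v : V, Fin (w v - 1))))
            have hbase : Sum.inl x.1 ∈ FF.pburnt (wGraph G w) (wFire F w) q
                (Fintype.card (V ⊕ Σ v : V, Fin (w v - 1))) :=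
              pburnt_mono _ _ q hNN (claimA q (Fintype.card V) x.1 hy')
            have hnot1 : Sum.inr x ∉ FF.pburnt (wGraph G w) (wFire F w) q
                (Fintype.card (V ⊕ Σ v : V, Fin (w v - 1)) + 1) := by
              rw [hstab]; exact hnx
            rw [pburnt_succ, mem_spread] at hnot1
            have hex : ∃ u ∈ FF.pburnt (wGraph G w) (wFire F w) q
                (Fintype.card (V ⊕ Σ v : V, Fin (w v - 1))),
                (wGraph G w).Adj u (Sum.inr x) := ⟨Sum.inl x.1, hbase, wGraph_adj_leaf x⟩
            rcases Classical.em (Sum.inr x ∈ FF.posDef q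
                (Fintype.card (V ⊕ Σ v : V, Fin (w v - 1)))) with hD | hD
            · obtain ⟨τ, hτ, i, hqi⟩ := mem_posDef.mp hD
              exact (leaf_never d q hq hqi (Fintype.card V)) hy'
            · exact hnot1 (Or.inr ⟨hD, hex⟩)
      calc k ≤ (Finset.univ \ FF.pburnt (wGraph G w) (wFire F w) q
              (Fintype.card (V ⊕ Σ v : V, Fin (w v - 1)))).card := hk
        _ ≤ ((Finset.univ : Finset (V ⊕ Σ v : V, Fin (w v - 1)))
              \ Tset w (FF.pburnt G F (fun t i => wproj w (q t i))
                  (Fintype.card V))).card :=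
            Finset.card_le_card (Finset.sdiff_subset_sdiff (le_refl _) hT)
        _ = ∑ v ∈ Finset.univ \ FF.pburnt G F (fun t i => wproj w (q t i))
              (Fintype.card V), w v := card_compl_Tset hw _
end
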